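/- arXiv:1701.05535 — 14 statements merged into one kernel-verified Lean document; each statement's English description precedes it below -/
import Mathlib

section
/- The intersection of the multibrot set M_3 with the imaginary axis is M_3 ∩ iℝ = {iy : y ∈ ℝ, |y| ≤ √(32/27)}. -/
open Filter Topology

/-- The real orbit: for `c = i y`, the orbit of `0` under `z ↦ z^3 + c` is `i * orbY y n`. -/
private def orbY (y : ℝ) : ℕ → ℝ
  | 0 => 0
  | n + 1 => y - (orbY y n) ^ 3

private lemma orbY_neg (y : ℝ) (n : ℕ) : orbY (-y) n = - orbY y n := by
  induction n with
  | zero => simp [orbY]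
  | succ n ih => simp only [orbY, ih]; ring

private lemma orbY_abs (y : ℝ) (n : ℕ) : |orbY (|y|) n| = |orbY y n| := by
  rcases abs_choice y with h | h
  · rw [h]
  · rw [h, orbY_neg, abs_neg]

private lemma iter_eq (y : ℝ) (n : ℕ) :
    (fun z : ℂ => z ^ 3 + (y : ℂ) * Complex.I)^[n] 0 = ((orbY y n : ℝ) : ℂ) * Complex.I := by
  induction n with
  | zero => simp [orbY]
  | succ n ih =>
    rw [Function.iterate_succ_apply', ih]
    have h : orbY y (n + 1) = y - (orbY y n) ^ 3 := rfl
    rw [h]; push_cast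
    linear_combination ((orbY y n : ℝ) : ℂ) ^ 3 * Complex.I * Complex.I_sq

private lemma cube_le_cube {a b : ℝ} (h : a ≤ b) : a ^ 3 ≤ b ^ 3 := by
  nlinarith [sq_nonneg (a + b), sq_nonneg a, sq_nonneg b]

/-- Bounded direction: if `0 ≤ y` and `y² ≤ 32/27`, the real orbit is bounded. -/
private lemma orbY_bounded (y : ℝ) (h0 : 0 ≤ y) (h : y ^ 2 ≤ 32 / 27) :
    ∃ C : ℝ, ∀ n, |orbY y n| ≤ C := by
  set s1 := Real.sqrt (2 / 3) with hs1def
  have hs1 : s1 ^ 2 = 2 / 3 := Real.sq_sqrt (by norm_num)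
  have hs1pos : 0 < s1 := Real.sqrt_pos.2 (by norm_num)
  have hA2 : (2 * s1 - s1 ^ 3) ^ 2 = 32 / 27 := by
    linear_combination (s1 ^ 4 - (10 / 3) * s1 ^ 2 + 16 / 9) * hs1
  have hA0 : 0 ≤ 2 * s1 - s1 ^ 3 := by nlinarith [hs1, hs1pos.le]
  have hyb : y ≤ 2 * s1 - s1 ^ 3 := by nlinarith
  obtain ⟨σ, hσmem, hσ⟩ :=
    intermediate_value_Icc (le_of_lt hs1pos)
      ((continuous_const.mul continuous_id').sub (continuous_pow 3)).continuousOn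
      (show y ∈ Set.Icc (2 * (0:ℝ) - 0 ^ 3) (2 * s1 - s1 ^ 3) by
        refine ⟨by simpa using h0, hyb⟩)
  have hσ0 : 0 ≤ σ := hσmem.1
  have hσ2 : σ ^ 2 ≤ 2 / 3 := by nlinarith [hσmem.2]
  have hy : 2 * σ - σ ^ 3 = y := hσ
  set r := Real.sqrt (4 - 3 * σ ^ 2) with hrdef
  have hr2 : r ^ 2 = 4 - 3 * σ ^ 2 := Real.sq_sqrt (by nlinarith)
  have hr0 : 0 ≤ r := Real.sqrt_nonneg _
  set p := (σ - r) / 2 with hpdef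
  set q := (σ + r) / 2 with hqdef
  have hpq1 : y - p ^ 3 = q := by
    rw [hpdef, hqdef]; linear_combination (-1 : ℝ) * hy + ((r - 3 * σ) / 8) * hr2
  have hpq2 : y - q ^ 3 = p := by
    rw [hpdef, hqdef]; linear_combination (-1 : ℝ) * hy + ((-r - 3 * σ) / 8) * hr2
  have hp0 : p ≤ 0 := by
    have : σ ≤ r := by nlinarith
    rw [hpdef]; linarith
  have hq0 : 0 ≤ q := by rw [hqdef]; linarith
  have key : ∀ n, p ≤ orbY y n ∧ orbY y n ≤ q := by
    intro n
    induction n with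
    | zero => exact ⟨hp0, hq0⟩
    | succ n ih =>
      obtain ⟨h1, h2⟩ := ih
      have c1 : (orbY y n) ^ 3 ≤ q ^ 3 := cube_le_cube h2
      have c2 : p ^ 3 ≤ (orbY y n) ^ 3 := cube_le_cube h1
      constructor
      · show p ≤ y - (orbY y n) ^ 3
        linarith [hpq2]
      · show y - (orbY y n) ^ 3 ≤ q
        linarith [hpq1]
  refine ⟨max (-p) q, fun n => abs_le.2 ⟨?_, ?_⟩⟩
  · have := (key n).1
    have : -(max (-p) q) ≤ p := by
      have : -p ≤ max (-p) q := le_max_left _ _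
      linarith
    linarith [(key n).1]
  · exact le_trans (key n).2 (le_max_right _ _)

/-- Unbounded direction: if `0 ≤ y` and `32/27 < y²`, the real orbit is unbounded. -/
private lemma orbY_unbounded (y : ℝ) (h0 : 0 ≤ y) (h : 32 / 27 < y ^ 2)
    (C : ℝ) (hC : ∀ n, |orbY y n| ≤ C) : False := by
  set b := Real.sqrt (32 / 27) with hbdef
  have hb2 : b ^ 2 = 32 / 27 := Real.sq_sqrt (by norm_num)
  have hbnn : 0 ≤ b := Real.sqrt_nonneg _
  have hb1 : 1 ≤ b := by nlinarith
  have hyb : b < y := by nlinarith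
  -- key pointwise inequality: the second iterate strictly decreases on `(-∞, 0]`
  have key : ∀ t : ℝ, t ≤ 0 → y - (y - t ^ 3) ^ 3 < t := by
    intro t ht
    have factor : t - (y - (y - t ^ 3) ^ 3)
        = (y - t ^ 3 - t) * ((y - t ^ 3) ^ 2 + (y - t ^ 3) * t + t ^ 2 - 1) := by ring
    have h1 : 0 < y - t ^ 3 - t := by nlinarith
    have h2 : 0 < (y - t ^ 3) ^ 2 + (y - t ^ 3) * t + t ^ 2 - 1 := by
      set s := -t with hsdef
      have hs : 0 ≤ s := by rw [hsdef]; linarith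
      have hts : t = -s := by rw [hsdef]; ring
      rw [hts]
      have haux : 0 < y + b + 2 * s ^ 3 - s := by
        nlinarith [mul_nonneg hs (sq_nonneg (s - 1)), sq_nonneg (2 * s - 3 / 4)]
      have e1 : b ^ 2 * s ^ 2 = (32 / 27) * s ^ 2 := by rw [hb2]
      nlinarith [sq_nonneg (12 * s ^ 2 + 9 * b * s - 4), sq_nonneg (4 * s ^ 3 - 4 * s + b),
        mul_pos (sub_pos.2 hyb) haux, e1, hb2]
    nlinarith [mul_pos h1 h2]
  -- the even-indexed orbit
  set e : ℕ → ℝ := fun n => orbY y (2 * n) with hedef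
  have estep : ∀ n, e (n + 1) = y - (y - (e n) ^ 3) ^ 3 := by
    intro n
    have h21 : 2 * (n + 1) = (2 * n + 1) + 1 := by ring
    show orbY y (2 * (n + 1)) = _
    rw [h21]
    show y - (orbY y (2 * n + 1)) ^ 3 = _
    have : orbY y (2 * n + 1) = y - (orbY y (2 * n)) ^ 3 := rfl
    rw [this]
  have hneg : ∀ n, e n ≤ 0 := by
    intro n
    induction n with
    | zero => exact le_rfl
    | succ n ih =>
      rw [estep n]
      exact le_trans (le_of_lt (key _ ih)) ih
  have hanti : StrictAnti e := by
    apply strictAnti_nat_of_succ_lt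
    intro n
    rw [estep n]
    exact key _ (hneg n)
  have hbdd : BddBelow (Set.range e) := by
    refine ⟨-C, ?_⟩
    rintro x ⟨n, rfl⟩
    have := hC (2 * n)
    rw [abs_le] at this
    exact this.1
  have hlim : Tendsto e atTop (𝓝 (⨅ n, e n)) := tendsto_atTop_ciInf hanti.antitone hbdd
  set L := ⨅ n, e n with hLdef
  have hL0 : L ≤ 0 := le_trans (ciInf_le hbdd 0) (hneg 0)
  have hcont : Continuous fun t : ℝ => y - (y - t ^ 3) ^ 3 := by continuity
  have h1 : Tendsto (fun n => e (n + 1)) atTop (𝓝 L) :=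
    hlim.comp (tendsto_add_atTop_nat 1)
  have h2 : Tendsto (fun n => y - (y - (e n) ^ 3) ^ 3) atTop (𝓝 (y - (y - L ^ 3) ^ 3)) :=
    (hcont.tendsto L).comp hlim
  have heq : y - (y - L ^ 3) ^ 3 = L := by
    apply tendsto_nhds_unique _ h1
    simpa only [← estep] using h2.congr (fun n => (estep n).symm)
  exact absurd heq (ne_of_lt (key L hL0))

/-- The intersection of the multibrot set `M_3` with the imaginary axis is
`{iy : |y| ≤ √(32/27)}`. -/
theorem stmt_1 :
    {c : ℂ | BddAbove (Set.range fun n => ‖(fun z : ℂ => z ^ 3 + c)^[n] 0‖)} ∩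
      {c : ℂ | ∃ y : ℝ, c = (y : ℂ) * Complex.I} =
    {c : ℂ | ∃ y : ℝ, |y| ≤ Real.sqrt (32 / 27) ∧ c = (y : ℂ) * Complex.I} := by
  have habs : ∀ (y : ℝ) (n : ℕ),
      ‖(fun z : ℂ => z ^ 3 + (y : ℂ) * Complex.I)^[n] 0‖ = |orbY y n| := by
    intro y n
    rw [iter_eq]
    simp [norm_mul, Complex.norm_real, Complex.norm_I]
  have hsq : (Real.sqrt (32 / 27)) ^ 2 = 32 / 27 := Real.sq_sqrt (by norm_num)
  have hsnn : 0 ≤ Real.sqrt (32 / 27) := Real.sqrt_nonneg _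
  ext c
  simp only [Set.mem_inter_iff, Set.mem_setOf_eq]
  constructor
  · rintro ⟨hbdd, y, rfl⟩
    refine ⟨y, ?_, rfl⟩
    by_contra hcon
    push_neg at hcon
    have h32 : 32 / 27 < (|y|) ^ 2 := by nlinarith [abs_nonneg y]
    obtain ⟨C, hCub⟩ := hbdd
    refine orbY_unbounded (|y|) (abs_nonneg y) h32 C (fun n => ?_)
    have hmem : ‖(fun z : ℂ => z ^ 3 + (y : ℂ) * Complex.I)^[n] 0‖
        ∈ Set.range fun n => ‖(fun z : ℂ => z ^ 3 + (y : ℂ) * Complex.I)^[n] 0‖ :=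
      ⟨n, rfl⟩
    have := hCub hmem
    rw [habs] at this
    rw [orbY_abs]
    exact this
  · rintro ⟨y, hy, rfl⟩
    refine ⟨?_, y, rfl⟩
    have h2 : (|y|) ^ 2 ≤ 32 / 27 := by nlinarith [abs_nonneg y, sq_abs y]
    obtain ⟨C, hC⟩ := orbY_bounded (|y|) (abs_nonneg y) h2
    refine ⟨C, ?_⟩
    rintro x ⟨n, rfl⟩
    simpa only [habs, orbY_abs] using hC n
end

section
/- Let d be an odd integer with d ≥ 3. Then N_d ∩ ℝ⁺ = [0, μ(d)], where μ(d) := max{a - b^d : a, b ≥ 0, a^d + b^d = a + b}. -/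
-- orbit is real
private lemma orbit_real (d : ℕ) (t : ℝ) (n : ℕ) :
    (fun z : ℂ => -z ^ d + (t : ℂ))^[n] 0 = (((fun x : ℝ => t - x ^ d)^[n] 0 : ℝ) : ℂ) := by
  induction n with
  | zero => simp
  | succ n ih =>
    rw [Function.iterate_succ_apply', Function.iterate_succ_apply', ih]
    push_cast
    ring

-- x^d - y^d ≥ x - y for 1 ≤ y ≤ x
private lemma pow_sub_pow_ge (d : ℕ) (hd : 1 ≤ d) {x y : ℝ} (hy : 1 ≤ y) (hxy : y ≤ x) :
    x - y ≤ x ^ d - y ^ d := by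
  induction d with
  | zero => omega
  | succ k ih =>
    rcases Nat.eq_or_lt_of_le hd with h | h
    · obtain rfl : k = 0 := by omega
      simp
    · have hk : 1 ≤ k := by omega
      have h1 := ih hk
      have hy0 : (0:ℝ) ≤ y := by linarith
      have hpow : y ^ k ≤ x ^ k := pow_le_pow_left₀ hy0 hxy k
      have hx1 : 1 ≤ x := le_trans hy hxy
      have hyk : 1 ≤ y ^ k := one_le_pow₀ hy
      have hxk : 1 ≤ x ^ k := le_trans hyk hpow
      calc x - y ≤ x ^ k - y ^ k := h1
        _ ≤ x * x ^ k - y * y ^ k := by nlinarith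
        _ = x ^ (k+1) - y ^ (k+1) := by ring

private lemma forward_dir (d : ℕ) (hd : 3 ≤ d) (hodd : Odd d) {t a₀ b₀ : ℝ}
    (ht0 : 0 ≤ t) (ha₀ : 0 ≤ a₀) (hb₀ : 0 ≤ b₀) (hcon : a₀ ^ d + b₀ ^ d = a₀ + b₀)
    (htμ : t ≤ a₀ - b₀ ^ d) :
    ∃ C : ℝ, ∀ n, |(fun x : ℝ => t - x ^ d)^[n] 0| ≤ C := by
  have hd0 : d ≠ 0 := by omega
  set x : ℕ → ℝ := fun n => (fun x : ℝ => t - x ^ d)^[n] 0 with hx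
  have hstep : ∀ n, x (n + 1) = t - (x n) ^ d := fun n => by
    simp only [hx, Function.iterate_succ_apply']
  have mono : Monotone (fun y : ℝ => y ^ d) := hodd.strictMono_pow.monotone
  rcases le_or_gt t 1 with h1 | h1
  · -- invariant interval [0, t]
    have key : ∀ n, 0 ≤ x n ∧ x n ≤ t := by
      intro n
      induction n with
      | zero => simp [hx, ht0]
      | succ n ih =>
        rw [hstep]
        constructor
        · have h2 : (x n) ^ d ≤ t ^ d := mono ih.2
          have h3 : t ^ d ≤ t ^ 1 := pow_le_pow_of_le_one ht0 h1 (by omega)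
          simp at h3; linarith
        · have : 0 ≤ (x n) ^ d := pow_nonneg ih.1 d
          linarith
    exact ⟨t, fun n => abs_le.2 ⟨by linarith [(key n).1], (key n).2⟩⟩
  · -- invariant interval [-b₀, t + b₀^d]
    have hb₀d : (0:ℝ) ≤ b₀ ^ d := pow_nonneg hb₀ d
    set a : ℝ := t + b₀ ^ d with hadef
    have key : a ^ d - t ≤ b₀ := by
      have h2 : (1:ℝ) ≤ a := by simp [hadef]; linarith
      have h3 : a ≤ a₀ := by simp [hadef]; linarith
      have h4 := pow_sub_pow_ge d (by omega) h2 h3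
      -- a₀ - a ≤ a₀^d - a^d
      have h5 : a₀ ^ d = a₀ + b₀ - b₀ ^ d := by linarith
      simp only [hadef] at h4 h5 ⊢
      linarith
    have inv : ∀ n, -b₀ ≤ x n ∧ x n ≤ a := by
      intro n
      induction n with
      | zero =>
        constructor
        · simp [hx]; linarith
        · simp [hx, hadef]; linarith
      | succ n ih =>
        rw [hstep]
        constructor
        · have h2 : (x n) ^ d ≤ a ^ d := mono ih.2
          linarith
        · have h2 : (-b₀) ^ d ≤ (x n) ^ d := mono ih.1
          rw [hodd.neg_pow] at h2
          simp [hadef]; linarith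
    refine ⟨max b₀ a, fun n => abs_le.2 ⟨?_, ?_⟩⟩
    · have := (inv n).1
      have : -(max b₀ a) ≤ -b₀ := neg_le_neg (le_max_left _ _)
      linarith [(inv n).1]
    · exact le_trans (inv n).2 (le_max_right _ _)

private lemma backward_dir (d : ℕ) (hd : 3 ≤ d) (hodd : Odd d) {t M : ℝ}
    (ht1 : 1 ≤ t) (hM : ∀ n, |(fun x : ℝ => t - x ^ d)^[n] 0| ≤ M) :
    ∃ a b : ℝ, 0 ≤ a ∧ 0 ≤ b ∧ a ^ d + b ^ d = a + b ∧ t = a - b ^ d := by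
  have hd0 : d ≠ 0 := by omega
  set x : ℕ → ℝ := fun n => (fun x : ℝ => t - x ^ d)^[n] 0 with hx
  have hstep : ∀ n, x (n + 1) = t - (x n) ^ d := fun n => by
    simp only [hx, Function.iterate_succ_apply']
  have mono : Monotone (fun y : ℝ => y ^ d) := hodd.strictMono_pow.monotone
  have hx0 : x 0 = 0 := rfl
  set e : ℕ → ℝ := fun n => x (2 * n) with he
  set o : ℕ → ℝ := fun n => x (2 * n + 1) with ho
  have hoe : ∀ n, o n = t - (e n) ^ d := fun n => hstep (2 * n)
  have heo : ∀ n, e (n + 1) = t - (o n) ^ d := by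
    intro n
    have := hstep (2 * n + 1)
    simp only [he, ho]
    rw [show 2 * (n + 1) = 2 * n + 1 + 1 by ring, this]
  have he0 : e 0 = 0 := hx0
  have ho0 : o 0 = t := by rw [hoe, he0, zero_pow hd0, sub_zero]
  have hesucc : ∀ n, e (n + 1) ≤ e n := by
    intro n
    induction n with
    | zero =>
      rw [heo, ho0, he0]
      have : t ≤ t ^ d := le_self_pow₀ ht1 hd0
      linarith
    | succ n ih =>
      have h1 : (e (n+1)) ^ d ≤ (e n) ^ d := mono ih
      have h2 : o n ≤ o (n + 1) := by rw [hoe, hoe]; linarith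
      have h3 : (o n) ^ d ≤ (o (n+1)) ^ d := mono h2
      rw [heo, heo]; linarith
  have hanti : Antitone e := antitone_nat_of_succ_le hesucc
  have hmono : Monotone o := monotone_nat_of_le_succ (by
    intro n
    have h1 : (e (n+1)) ^ d ≤ (e n) ^ d := mono (hesucc n)
    rw [hoe, hoe]; linarith)
  have hbddb : BddBelow (Set.range e) := by
    refine ⟨-M, ?_⟩
    rintro y ⟨n, rfl⟩
    have := hM (2 * n)
    rw [abs_le] at this
    exact this.1
  have hbdda : BddAbove (Set.range o) := by
    refine ⟨M, ?_⟩
    rintro y ⟨n, rfl⟩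
    have := hM (2 * n + 1)
    rw [abs_le] at this
    exact this.2
  set L : ℝ := ⨅ n, e n with hL
  set A : ℝ := ⨆ n, o n with hA
  have htL : Filter.Tendsto e Filter.atTop (nhds L) := tendsto_atTop_ciInf hanti hbddb
  have htA : Filter.Tendsto o Filter.atTop (nhds A) := tendsto_atTop_ciSup hmono hbdda
  have htA2 : Filter.Tendsto o Filter.atTop (nhds (t - L ^ d)) := by
    have : Filter.Tendsto (fun n => t - (e n) ^ d) Filter.atTop (nhds (t - L ^ d)) :=
      Filter.Tendsto.sub tendsto_const_nhds (htL.pow d)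
    exact this.congr (fun n => (hoe n).symm)
  have hAL : A = t - L ^ d := tendsto_nhds_unique htA htA2
  have htL2 : Filter.Tendsto (fun n => e (n + 1)) Filter.atTop (nhds L) :=
    htL.comp (Filter.tendsto_add_atTop_nat 1)
  have htL3 : Filter.Tendsto (fun n => e (n + 1)) Filter.atTop (nhds (t - A ^ d)) := by
    have : Filter.Tendsto (fun n => t - (o n) ^ d) Filter.atTop (nhds (t - A ^ d)) :=
      Filter.Tendsto.sub tendsto_const_nhds (htA.pow d)
    exact this.congr (fun n => (heo n).symm)
  have hLA : L = t - A ^ d := tendsto_nhds_unique htL2 htL3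
  have hAge : t ≤ A := by
    have := le_ciSup hbdda 0
    rw [ho0] at this
    exact this
  have hLle : L ≤ 0 := by
    have := ciInf_le hbddb 0
    rw [he0] at this
    exact this
  refine ⟨A, -L, by linarith, by linarith, ?_, ?_⟩
  · have h1 : (-L) ^ d = -(L ^ d) := hodd.neg_pow L
    have h2 : A ^ d = t - L := by linarith
    rw [h1, h2]
    linarith
  · have h1 : (-L) ^ d = -(L ^ d) := hodd.neg_pow L
    rw [h1]
    linarith



/-- For odd `d ≥ 3`, the intersection of `N_d = {c : ℂ | orbit of 0 under z ↦ -z^d + c bounded}`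
with the nonnegative real axis is `[0, μ(d)]`, where
`μ(d) = max {a - b^d : a, b ≥ 0, a^d + b^d = a + b}`. -/
theorem stmt_3 (d : ℕ) (hd : 3 ≤ d) (hodd : Odd d) (μ : ℝ)
    (hμ : IsGreatest {x : ℝ | ∃ a b : ℝ, 0 ≤ a ∧ 0 ≤ b ∧ a ^ d + b ^ d = a + b ∧ x = a - b ^ d} μ) :
    {c : ℂ | BddAbove (Set.range fun n => ‖(fun z : ℂ => -z ^ d + c)^[n] 0‖)} ∩
      {c : ℂ | ∃ t : ℝ, 0 ≤ t ∧ c = (t : ℂ)} =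
    {c : ℂ | ∃ t : ℝ, 0 ≤ t ∧ t ≤ μ ∧ c = (t : ℂ)} := by
  have hd0 : d ≠ 0 := by omega
  ext c
  simp only [Set.mem_inter_iff, Set.mem_setOf_eq]
  constructor
  · rintro ⟨hbdd, t, ht0, rfl⟩
    refine ⟨t, ht0, ?_, rfl⟩
    have hμ1 : 1 ≤ μ := hμ.2 ⟨1, 0, by norm_num, le_refl 0, by simp [zero_pow hd0], by simp [zero_pow hd0]⟩
    by_contra hcon
    push_neg at hcon
    have ht1 : 1 ≤ t := le_trans hμ1 hcon.le
    obtain ⟨M, hMub⟩ := hbdd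
    have hM : ∀ n, |(fun x : ℝ => t - x ^ d)^[n] 0| ≤ M := by
      intro n
      have h1 : ‖(fun z : ℂ => -z ^ d + (t:ℂ))^[n] 0‖ ≤ M :=
        hMub ⟨n, rfl⟩
      rwa [orbit_real d t n, Complex.norm_real, Real.norm_eq_abs] at h1
    obtain ⟨a, b, ha, hb, hc, hv⟩ := backward_dir d hd hodd ht1 hM
    have : t ≤ μ := hμ.2 ⟨a, b, ha, hb, hc, hv⟩
    linarith
  · rintro ⟨t, ht0, htμ, rfl⟩
    refine ⟨?_, t, ht0, rfl⟩
    obtain ⟨a₀, b₀, ha₀, hb₀, hcon, hval⟩ := hμ.1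
    obtain ⟨C, hC⟩ := forward_dir d hd hodd ht0 ha₀ hb₀ hcon (by rw [← hval]; exact htμ)
    refine ⟨C, ?_⟩
    rintro y ⟨n, rfl⟩
    simp only
    rw [orbit_real d t n, Complex.norm_real, Real.norm_eq_abs]
    exact hC n
end

section
/- Let d be an odd integer with d ≥ 3. Then μ(d) = γ(d), where μ(d) := max{a - b^d : a, b ≥ 0, a^d + b^d = a + b}, γ(d) := d^{-d/(d-1)}(sinh(d ξ_d) + d sinh(ξ_d)), and ξ_d is the unique positive root of cosh(d ξ) = d cosh(ξ). -/
/-- Tangent-line inequality for `x ^ n` at a positive point `m`. -/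
lemma tangent_line (n : ℕ) {x m : ℝ} (hx : 0 ≤ x) (hm : 0 < m) :
    (n : ℝ) * m ^ (n - 1) * (x - m) ≤ x ^ n - m ^ n := by
  cases n with
  | zero => simp
  | succ k =>
    have ha : (-2 : ℝ) ≤ x / m - 1 := by
      have := div_nonneg hx hm.le; linarith
    have h := one_add_mul_le_pow ha (k + 1)
    have h2 := mul_le_mul_of_nonneg_left h (pow_pos hm (k + 1)).le
    have e1 : m ^ (k + 1) * (1 + ((k + 1 : ℕ) : ℝ) * (x / m - 1))
        = m ^ (k + 1) + ((k + 1 : ℕ) : ℝ) * m ^ k * (x - m) := by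
      field_simp
      ring
    have e2 : m ^ (k + 1) * (1 + (x / m - 1)) ^ (k + 1) = x ^ (k + 1) := by
      have hxm : (1 : ℝ) + (x / m - 1) = x / m := by ring
      rw [hxm, div_pow]
      field_simp
    rw [e1, e2] at h2
    have hk : k + 1 - 1 = k := rfl
    rw [hk]
    linarith

/-- For odd `d ≥ 3`, `μ(d) = γ(d)`: the maximum of `a - b^d` over
`{a, b ≥ 0 : a^d + b^d = a + b}` equals `d^(-d/(d-1)) * (sinh (d ξ) + d sinh ξ)`,
where `ξ` is the unique positive root of `cosh (d ξ) = d cosh ξ`. -/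
theorem stmt_4 (d : ℕ) (hd : 3 ≤ d) (hodd : Odd d) (μ : ℝ)
    (hμ : IsGreatest {x : ℝ | ∃ a b : ℝ, 0 ≤ a ∧ 0 ≤ b ∧ a ^ d + b ^ d = a + b ∧ x = a - b ^ d} μ)
    (ξ : ℝ) (hξpos : 0 < ξ)
    (hξ : Real.cosh ((d : ℝ) * ξ) = (d : ℝ) * Real.cosh ξ)
    (hξuniq : ∀ x : ℝ, 0 < x → Real.cosh ((d : ℝ) * x) = (d : ℝ) * Real.cosh x → x = ξ) :
    μ = (d : ℝ) ^ (-(d : ℝ) / ((d : ℝ) - 1)) *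
          (Real.sinh ((d : ℝ) * ξ) + (d : ℝ) * Real.sinh ξ) := by
  set D := (d : ℝ) with hD
  have hD3 : (3 : ℝ) ≤ D := by rw [hD]; exact_mod_cast hd
  have hD0 : (0 : ℝ) < D := by linarith
  have hDm1 : (0 : ℝ) < D - 1 := by linarith
  set c : ℝ := (D⁻¹) ^ (1 / (D - 1)) with hc_def
  have hc0 : 0 < c := Real.rpow_pos_of_pos (inv_pos.2 hD0) _
  have hcast : ((d - 1 : ℕ) : ℝ) = D - 1 := by
    rw [Nat.cast_sub (by omega)]; norm_num; exact hD.symm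
  have hcd1 : c ^ (d - 1) = D⁻¹ := by
    rw [hc_def, ← Real.rpow_natCast ((D⁻¹) ^ (1 / (D - 1))) (d - 1),
      ← Real.rpow_mul (inv_pos.2 hD0).le, hcast, one_div,
      inv_mul_cancel₀ hDm1.ne', Real.rpow_one]
  have hcd : c ^ d = c * D⁻¹ := by
    have hsplit : d - 1 + 1 = d := by omega
    rw [← hsplit, pow_succ, hcd1]
    ring
  set a0 : ℝ := c * Real.exp ξ with ha0_def
  set b0 : ℝ := c * Real.exp (-ξ) with hb0_def
  have ha0pos : 0 < a0 := mul_pos hc0 (Real.exp_pos _)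
  have hb0pos : 0 < b0 := mul_pos hc0 (Real.exp_pos _)
  -- exponential identities
  have hξexp : Real.exp (D * ξ) + Real.exp (-(D * ξ)) = D * (Real.exp ξ + Real.exp (-ξ)) := by
    rw [Real.cosh_eq, Real.cosh_eq] at hξ
    linarith
  have ha0pow : a0 ^ d = c * D⁻¹ * Real.exp (D * ξ) := by
    rw [ha0_def, mul_pow, hcd, ← Real.exp_nat_mul, ← hD]
  have hb0pow : b0 ^ d = c * D⁻¹ * Real.exp (-(D * ξ)) := by
    rw [hb0_def, mul_pow, hcd, ← Real.exp_nat_mul, ← hD]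
    congr 2
    ring
  have ha0pow1 : a0 ^ (d - 1) = D⁻¹ * Real.exp ((D - 1) * ξ) := by
    rw [ha0_def, mul_pow, hcd1, ← Real.exp_nat_mul, hcast]
  have hb0pow1 : b0 ^ (d - 1) = D⁻¹ * Real.exp (-((D - 1) * ξ)) := by
    rw [hb0_def, mul_pow, hcd1, ← Real.exp_nat_mul, hcast]
    congr 2
    ring
  set E : ℝ := Real.exp ((D - 1) * ξ) with hE_def
  have hE0 : 0 < E := Real.exp_pos _
  have hE1 : 1 < E := by
    rw [hE_def]
    exact Real.one_lt_exp_iff.2 (mul_pos hDm1 hξpos)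
  have hEa : D * a0 ^ (d - 1) = E := by
    rw [ha0pow1, ← mul_assoc, mul_inv_cancel₀ hD0.ne', one_mul]
  have hEb : D * b0 ^ (d - 1) = E⁻¹ := by
    rw [hb0pow1, ← mul_assoc, mul_inv_cancel₀ hD0.ne', one_mul, hE_def, ← Real.exp_neg]
  -- the candidate point satisfies the constraint
  have hDinv : D⁻¹ * D = 1 := inv_mul_cancel₀ hD0.ne'
  have cons0 : a0 ^ d + b0 ^ d = a0 + b0 := by
    rw [ha0pow, hb0pow, ha0_def, hb0_def]
    linear_combination (c * D⁻¹) * hξexp + (c * (Real.exp ξ + Real.exp (-ξ))) * hDinv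
  -- the value at the candidate point
  have hpow : D ^ (-D / (D - 1)) = c * D⁻¹ := by
    have hexp_eq : -D / (D - 1) = -(1 / (D - 1) + 1) := by
      field_simp
      ring
    rw [hexp_eq, Real.rpow_neg hD0.le, ← Real.inv_rpow hD0.le,
      Real.rpow_add (inv_pos.2 hD0), Real.rpow_one, hc_def]
  have hval : a0 - b0 ^ d
      = D ^ (-D / (D - 1)) * (Real.sinh (D * ξ) + D * Real.sinh ξ) := by
    rw [hpow, hb0pow, Real.sinh_eq, Real.sinh_eq, ha0_def]
    linear_combination (-(c * D⁻¹ / 2)) * hξexp + (-(c * Real.exp ξ)) * hDinv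
  -- lower bound : the value is attained
  have hmem : D ^ (-D / (D - 1)) * (Real.sinh (D * ξ) + D * Real.sinh ξ) ∈
      {x : ℝ | ∃ a b : ℝ, 0 ≤ a ∧ 0 ≤ b ∧ a ^ d + b ^ d = a + b ∧ x = a - b ^ d} :=
    ⟨a0, b0, ha0pos.le, hb0pos.le, cons0, hval.symm⟩
  have hlow := hμ.2 hmem
  -- upper bound
  obtain ⟨a, b, ha, hb, cons, hμval⟩ := hμ.1
  have T1 : E * (a - a0) ≤ a ^ d - a0 ^ d := by
    have h := tangent_line d ha ha0pos
    rw [← hD] at h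
    rw [← hEa]
    exact h
  have T2 : E⁻¹ * (b - b0) ≤ b ^ d - b0 ^ d := by
    have h := tangent_line d hb hb0pos
    rw [← hD] at h
    rw [← hEb]
    exact h
  have T2' : b - b0 ≤ E * (b ^ d - b0 ^ d) := by
    have h := mul_le_mul_of_nonneg_left T2 hE0.le
    rw [← mul_assoc, mul_inv_cancel₀ hE0.ne', one_mul] at h
    exact h
  have h1 : (E - 1) * (a - b ^ d) ≤ (E - 1) * (a0 - b0 ^ d) := by linarith [T1, T2', cons, cons0]
  have key : a - b ^ d ≤ a0 - b0 ^ d := le_of_mul_le_mul_left h1 (by linarith)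
  have hup : μ ≤ D ^ (-D / (D - 1)) * (Real.sinh (D * ξ) + D * Real.sinh ξ) := by
    rw [hμval, ← hval]
    exact key
  exact le_antisymm hup hlow
end

section
/- There exist constants C > 0 and d_0 > 1 such that for all real d ≥ d_0, |log γ(d) - (log 2)/d| ≤ C (log d)²/d²; equivalently, γ(d) = 2^{1/d + O((log d)²/d²)} as d → ∞. -/
open Real

lemma aux_sinh_cosh {x : ℝ} (h0 : 0 ≤ x) (h1 : x ≤ 1) :
    Real.sinh x ≤ x + x ^ 3 ∧ Real.cosh x ≤ 1 + x ^ 2 := by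
  have hx : |x| ≤ 1 := by rw [abs_of_nonneg h0]; exact h1
  have hx' : |(-x)| ≤ 1 := by rwa [abs_neg]
  have h2 := Real.exp_bound hx (n := 3) (by norm_num)
  have h3 := Real.exp_bound hx' (n := 3) (by norm_num)
  rw [abs_of_nonneg h0] at h2
  rw [abs_neg, abs_of_nonneg h0] at h3
  simp only [Finset.sum_range_succ, Finset.sum_range_zero] at h2 h3
  norm_num [Nat.factorial] at h2 h3
  rw [abs_sub_le_iff] at h2 h3
  obtain ⟨h2a, h2b⟩ := h2
  obtain ⟨h3a, h3b⟩ := h3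
  have hs := Real.sinh_eq x
  have hc := Real.cosh_eq x
  constructor
  · rw [hs]; nlinarith [pow_le_pow_left₀ h0 h1 3, sq_nonneg x]
  · rw [hc]; nlinarith [pow_le_pow_left₀ h0 h1 3, sq_nonneg x]

set_option maxHeartbeats 2000000 in
/-- Asymptotics of `γ(d)`: if for each real `d > 1`, `ξ d` is the unique positive root of
`cosh (d ξ) = d cosh ξ`, and `γ d = d^(-d/(d-1)) * (sinh (d ξ d) + d sinh (ξ d))`, then
`log (γ d) = (log 2)/d + O((log d)²/d²)` as `d → ∞`, i.e. `γ(d) = 2^(1/d + O((log d)²/d²))`. -/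
theorem stmt_5 (ξ : ℝ → ℝ)
    (hξ : ∀ d : ℝ, 1 < d → 0 < ξ d ∧ Real.cosh (d * ξ d) = d * Real.cosh (ξ d)) :
    ∃ C : ℝ, 0 < C ∧ ∃ d₀ : ℝ, 1 < d₀ ∧ ∀ d : ℝ, d₀ ≤ d →
      |Real.log (d ^ (-d / (d - 1)) * (Real.sinh (d * ξ d) + d * Real.sinh (ξ d)))
          - Real.log 2 / d| ≤ C * (Real.log d) ^ 2 / d ^ 2 := by
  refine ⟨100, by norm_num, 10000, by norm_num, fun d hd => ?_⟩
  have hd1 : (1:ℝ) < d := by linarith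
  have hd0 : (0:ℝ) < d := by linarith
  have hd1pos : (0:ℝ) < d - 1 := by linarith
  obtain ⟨hx0, hch⟩ := hξ d hd1
  set x := ξ d with hxdef
  set t := d * x with htdef
  set L := Real.log d with hLdef
  clear_value x t L
  have ht0 : 0 < t := by rw [htdef]; exact mul_pos hd0 hx0
  have hc1 : 1 ≤ Real.cosh x := Real.one_le_cosh x
  have hd2ge1 : (1:ℝ) ≤ d ^ 2 := le_trans hd1.le (le_self_pow₀ hd1.le (by norm_num))
  have hdiv1 : 1 / d ≤ 1 := (div_le_one hd0).2 hd1.le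
  have hdinvsq1 : 1 / d ^ 2 ≤ 1 := by
    rw [div_le_one (by positivity)]; exact hd2ge1
  -- L ≥ 1
  have hL1 : 1 ≤ L := by
    rw [hLdef, Real.le_log_iff_exp_le hd0]
    have := Real.exp_one_lt_d9
    linarith
  have hL0 : 0 < L := by linarith
  -- L ≤ d/50
  have hsqrtd : Real.sqrt d * Real.sqrt d = d := Real.mul_self_sqrt hd0.le
  have hsqrt100 : 100 ≤ Real.sqrt d := by
    have h : (100:ℝ) = Real.sqrt 10000 := by
      rw [show (10000:ℝ) = 100 ^ 2 by norm_num, Real.sqrt_sq (by norm_num : (0:ℝ) ≤ 100)]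
    rw [h]
    exact Real.sqrt_le_sqrt hd
  have hLsqrt : L ≤ 2 * Real.sqrt d := by
    have h1 : L = 2 * Real.log (Real.sqrt d) := by
      rw [hLdef, Real.log_sqrt hd0.le]; ring
    have h2 : Real.log (Real.sqrt d) ≤ Real.sqrt d - 1 :=
      Real.log_le_sub_one_of_pos (Real.sqrt_pos.2 hd0)
    linarith
  have hLd : L ≤ d / 50 := by
    nlinarith only [hsqrtd, hsqrt100, hLsqrt, Real.sqrt_nonneg d]
  -- exp t ≥ d, so t ≥ L
  have hcosh_t_eq : Real.exp t + Real.exp (-t) = 2 * (d * Real.cosh x) := by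
    have h := Real.cosh_eq t
    rw [hch] at h
    linarith
  have hexp_t_ge : d ≤ Real.exp t := by
    have h1 : d ≤ d * Real.cosh x := le_mul_of_one_le_right hd0.le hc1
    have h2 : Real.exp (-t) ≤ Real.exp t := Real.exp_le_exp.2 (by linarith)
    linarith
  have htL : L ≤ t := by
    rw [hLdef, Real.log_le_iff_le_exp hd0]
    exact hexp_t_ge
  -- cosh x ≤ exp x
  have hcx_exp : Real.cosh x ≤ Real.exp x := by
    rw [Real.cosh_eq]
    have h2 : Real.exp (-x) ≤ Real.exp x := Real.exp_le_exp.2 (by linarith)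
    linarith
  -- x ≤ 4L/d and x ≤ 1/5
  have htx : t - x ≤ Real.log 2 + L := by
    have h5 : Real.exp (t - x) ≤ 2 * d := by
      rw [Real.exp_sub, div_le_iff₀ (Real.exp_pos x)]
      have h6 : Real.exp t ≤ 2 * (d * Real.cosh x) := by
        have := (Real.exp_pos (-t)).le
        linarith
      have h7 : d * Real.cosh x ≤ d * Real.exp x :=
        mul_le_mul_of_nonneg_left hcx_exp hd0.le
      linarith only [h6, h7]
    have h8 : t - x ≤ Real.log (2 * d) := by
      rw [Real.le_log_iff_exp_le (by positivity)]
      exact h5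
    rw [Real.log_mul (by norm_num) hd0.ne', ← hLdef] at h8
    exact h8
  have hlog2 : Real.log 2 ≤ 1 := by
    have := Real.log_le_sub_one_of_pos (show (0:ℝ) < 2 by norm_num)
    linarith
  have hlog2' : 0 < Real.log 2 := Real.log_pos (by norm_num)
  have hx4 : x ≤ 4 * L / d := by
    have h9 : (d - 1) * x ≤ 2 * L := by
      have h10 : t - x = (d - 1) * x := by rw [htdef]; ring
      linarith
    have h11 : 0 ≤ (d - 2) * x := mul_nonneg (by linarith) hx0.le
    rw [le_div_iff₀ hd0]
    linarith only [h9, h11]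
  have hxLd : L / d ≤ 1 / 50 := by
    rw [div_le_div_iff₀ hd0 (by norm_num : (0:ℝ) < 50)]
    linarith
  have hx5 : x ≤ 1 / 5 := by
    rw [mul_div_assoc] at hx4
    linarith
  have hxL : L / d ≤ x := by
    rw [div_le_iff₀ hd0]
    have := htL
    rw [htdef] at this
    linarith only [this]
  have hx_pos_d : 1 / d ≤ x := by
    have h1 : 1 / d ≤ L / d := by gcongr
    linarith
  -- Taylor bounds
  obtain ⟨hsx_ub, hcx_ub⟩ := aux_sinh_cosh hx0.le (by linarith)
  have hsx_lb : x ≤ Real.sinh x := Real.self_le_sinh_iff.2 hx0.le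
  -- sinh t bounds
  have hst0 : 0 ≤ Real.sinh t := Real.sinh_nonneg_iff.2 ht0.le
  have hst_ub : Real.sinh t ≤ d * Real.cosh x := by
    rw [← hch, Real.sinh_eq, Real.cosh_eq]
    have := (Real.exp_pos (-t)).le
    linarith
  have hst_lb : d * Real.cosh x - 1 / d ≤ Real.sinh t := by
    have hsq : Real.sinh t ^ 2 = (d * Real.cosh x) ^ 2 - 1 := by
      rw [Real.sinh_sq, hch]
    by_contra hcon
    push_neg at hcon
    have hsq2 : Real.sinh t ^ 2 < (d * Real.cosh x - 1 / d) ^ 2 := by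
      apply pow_lt_pow_left₀ hcon hst0
      norm_num
    have hexp : (d * Real.cosh x - 1 / d) ^ 2
        = (d * Real.cosh x) ^ 2 - 2 * Real.cosh x + 1 / d ^ 2 := by
      field_simp; ring
    linarith only [hsq, hsq2, hexp, hc1, hdinvsq1]
  -- A and u
  set A := Real.sinh t + d * Real.sinh x with hAdef
  clear_value A
  have hA_lb : d + d * x - 1 / d ≤ A := by
    have h11 : d * x ≤ d * Real.sinh x := mul_le_mul_of_nonneg_left hsx_lb hd0.le
    have h12 : d ≤ d * Real.cosh x := le_mul_of_one_le_right hd0.le hc1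
    rw [hAdef]
    linarith
  have hA_ub : A ≤ d * (1 + x + x ^ 2 + x ^ 3) := by
    have h13 : d * Real.sinh x ≤ d * (x + x ^ 3) := mul_le_mul_of_nonneg_left hsx_ub hd0.le
    have h14 : d * Real.cosh x ≤ d * (1 + x ^ 2) := mul_le_mul_of_nonneg_left hcx_ub hd0.le
    rw [hAdef]
    linarith only [h13, h14, hst_ub]
  set u := A / d - 1 with hudef
  clear_value u
  have hAu : A = d * (1 + u) := by rw [hudef]; field_simp; ring
  have hu_lb : x - 1 / d ^ 2 ≤ u := by
    have h15 : (d + d * x - 1 / d) / d ≤ A / d := by gcongr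
    have h16 : (d + d * x - 1 / d) / d = 1 + x - 1 / d ^ 2 := by field_simp
    rw [hudef]
    linarith only [h15, h16.le, h16.ge]
  have hu_ub : u ≤ x + x ^ 2 + x ^ 3 := by
    have h17 : A / d ≤ d * (1 + x + x ^ 2 + x ^ 3) / d := by gcongr
    have h18 : d * (1 + x + x ^ 2 + x ^ 3) / d = 1 + x + x ^ 2 + x ^ 3 := by field_simp
    rw [hudef]
    linarith only [h17, h18.le, h18.ge]
  have hd2_lt : 1 / d ^ 2 < 1 / d := by
    rw [div_lt_div_iff₀ (by positivity) hd0]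
    have : d * 1 < d * d := mul_lt_mul_of_pos_left hd1 hd0
    linarith only [this]
  have hu0 : 0 < u := by linarith only [hu_lb, hx_pos_d, hd2_lt]
  have hxx : x ^ 2 ≤ x / 5 := by
    have h := mul_le_mul_of_nonneg_left hx5 hx0.le
    linarith only [h]
  have hxxx : x ^ 3 ≤ x / 25 := by
    have h := mul_le_mul_of_nonneg_left hxx hx0.le
    have h2 := mul_le_mul_of_nonneg_left hx5 (show (0:ℝ) ≤ x * x by positivity)
    linarith only [h, h2, hxx]
  have hu2x : u ≤ 2 * x := by linarith only [hu_ub, hxx, hxxx, hx0.le]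
  -- log(1+u) bounds
  have h1u : 0 < 1 + u := by linarith
  have hlog_ub : Real.log (1 + u) ≤ u := by
    have := Real.log_le_sub_one_of_pos h1u
    linarith
  have hlog_lb : u - u ^ 2 ≤ Real.log (1 + u) := by
    have h9 := Real.log_le_sub_one_of_pos (show 0 < (1 + u)⁻¹ by positivity)
    rw [Real.log_inv] at h9
    have h11 : u - u ^ 2 ≤ u / (1 + u) := by
      rw [le_div_iff₀ h1u]
      nlinarith only [pow_nonneg hu0.le 3]
    have h10 : (1 + u)⁻¹ - 1 = -(u / (1 + u)) := by field_simp; ring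
    linarith only [h9, h10.le, h10.ge, h11]
  -- t bounds
  have ht_ub : t ≤ (Real.log 2 + L) + x ^ 2 := by
    have h14' : d * Real.cosh x ≤ d * (1 + x ^ 2) := mul_le_mul_of_nonneg_left hcx_ub hd0.le
    have h12 : Real.exp t ≤ 2 * d * (1 + x ^ 2) := by
      have := (Real.exp_pos (-t)).le
      linarith only [hcosh_t_eq, h14', this]
    have h13 : t ≤ Real.log (2 * d * (1 + x ^ 2)) := by
      rw [Real.le_log_iff_exp_le (by positivity)]
      exact h12
    have h14 : Real.log (2 * d * (1 + x ^ 2)) = Real.log 2 + L + Real.log (1 + x ^ 2) := by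
      rw [Real.log_mul (by positivity) (by positivity), Real.log_mul (by norm_num) hd0.ne', hLdef]
    have h15 : Real.log (1 + x ^ 2) ≤ x ^ 2 := by
      have := Real.log_le_sub_one_of_pos (show (0:ℝ) < 1 + x ^ 2 by positivity)
      linarith
    linarith
  have ht_lb : (Real.log 2 + L) - 1 / d ^ 2 ≤ t := by
    have h16 : Real.exp (-t) ≤ d⁻¹ := by
      rw [Real.exp_neg]
      exact inv_anti₀ hd0 hexp_t_ge
    have h17 : 2 * d - d⁻¹ ≤ Real.exp t := by
      have h18 : d * 1 ≤ d * Real.cosh x := mul_le_mul_of_nonneg_left hc1 hd0.le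
      linarith only [hcosh_t_eq, h16, h18]
    have hdinv_eq : d⁻¹ = 1 / d := by rw [inv_eq_one_div]
    have h19 : Real.log (2 * d - d⁻¹) ≤ t := by
      rw [Real.log_le_iff_le_exp (by rw [hdinv_eq]; linarith only [hdiv1, hd1])]
      exact h17
    have h20 : 2 * d - d⁻¹ = (2 * d) * (1 - 1 / (2 * d ^ 2)) := by field_simp
    have hz0 : (0:ℝ) < 1 - 1 / (2 * d ^ 2) := by
      have h : 1 / (2 * d ^ 2) ≤ 1 / 2 := by
        rw [div_le_div_iff₀ (by positivity) (by norm_num)]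
        linarith only [hd2ge1]
      linarith
    have h21 : Real.log ((2 * d) * (1 - 1 / (2 * d ^ 2)))
        = Real.log 2 + L + Real.log (1 - 1 / (2 * d ^ 2)) := by
      rw [Real.log_mul (by positivity) hz0.ne', Real.log_mul (by norm_num) hd0.ne', hLdef]
    have h22 : -(1 / d ^ 2) ≤ Real.log (1 - 1 / (2 * d ^ 2)) := by
      have h23 := Real.log_le_sub_one_of_pos (inv_pos.2 hz0)
      rw [Real.log_inv] at h23
      have h0d : (0:ℝ) ≤ 1 / d := by positivity
      have hee : (1 / d) ^ 2 ≤ 1 := by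
        nlinarith only [mul_le_mul hdiv1 hdiv1 h0d (by norm_num : (0:ℝ) ≤ 1)]
      have h24 : (1 - 1 / (2 * d ^ 2))⁻¹ ≤ 1 + 1 / d ^ 2 := by
        rw [inv_eq_one_div, div_le_iff₀ hz0]
        have key : (1 + 1 / d ^ 2) * (1 - 1 / (2 * d ^ 2)) - 1
            = 1 / (2 * d ^ 2) * (1 - (1 / d) ^ 2) := by ring
        have h2 : 0 ≤ 1 / (2 * d ^ 2) * (1 - (1 / d) ^ 2) :=
          mul_nonneg (by positivity) (by linarith only [hee])
        linarith only [key.le, key.ge, h2]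
      linarith only [h23, h24]
    rw [h20, h21] at h19
    linarith only [h19, h22]
  -- log identity
  have hApos : 0 < A := by
    linarith only [hA_lb, mul_pos hd0 hx0, hdiv1, hd1]
  have hGlog : Real.log (d ^ (-d / (d - 1)) * A)
      = (-d / (d - 1)) * L + (L + Real.log (1 + u)) := by
    rw [Real.log_mul (ne_of_gt (Real.rpow_pos_of_pos hd0 _)) hApos.ne',
      Real.log_rpow hd0, hAu, Real.log_mul hd0.ne' h1u.ne', ← hLdef]
  rw [hGlog]
  have hrw : (-d / (d - 1)) * L + (L + Real.log (1 + u)) - Real.log 2 / d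
      = (Real.log (1 + u) - x) + (t - (Real.log 2 + L)) / d - L / (d * (d - 1)) := by
    rw [htdef]
    field_simp
    ring
  rw [hrw]
  -- component bounds
  have hu2sq : u ^ 2 ≤ 4 * x ^ 2 := by
    have := mul_self_le_mul_self hu0.le hu2x
    nlinarith only [this]
  have hx3 : x ^ 3 ≤ x ^ 2 := by
    have h := mul_le_mul_of_nonneg_left (show x ≤ 1 by linarith) (sq_nonneg x)
    nlinarith only [h]
  have he1_ub : Real.log (1 + u) - x ≤ 2 * x ^ 2 := by
    linarith only [hlog_ub, hu_ub, hx3]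
  have he1_lb : -(1 / d ^ 2) - 4 * x ^ 2 ≤ Real.log (1 + u) - x := by
    linarith only [hlog_lb, hu_lb, hu2sq]
  have he2_ub : (t - (Real.log 2 + L)) / d ≤ x ^ 2 := by
    rw [div_le_iff₀ hd0]
    have h := mul_le_mul_of_nonneg_left (show (1:ℝ) ≤ d by linarith) (sq_nonneg x)
    linarith only [ht_ub, h]
  have he2_lb : -(1 / d ^ 2) ≤ (t - (Real.log 2 + L)) / d := by
    rw [le_div_iff₀ hd0]
    have h : (1 / d ^ 2) * d = 1 / d := by field_simp
    linarith only [ht_lb, hd2_lt, h.le, h.ge]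
  have hT_pos : 0 < L / (d * (d - 1)) := div_pos hL0 (by positivity)
  have hLL : L ≤ L ^ 2 := by
    have h := mul_nonneg hL0.le (sub_nonneg.2 hL1)
    nlinarith only [h]
  have hT_ub : L / (d * (d - 1)) ≤ 2 * (L ^ 2 / d ^ 2) := by
    rw [show (2:ℝ) * (L ^ 2 / d ^ 2) = 2 * L ^ 2 / d ^ 2 by ring,
      div_le_div_iff₀ (by positivity) (by positivity)]
    have hdd2 : d ^ 2 ≤ 2 * (d * (d - 1)) := by
      have h := mul_le_mul_of_nonneg_left (show (2:ℝ) ≤ d by linarith) hd0.le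
      nlinarith only [h]
    have ha : L * d ^ 2 ≤ L ^ 2 * d ^ 2 :=
      mul_le_mul_of_nonneg_right hLL (sq_nonneg d)
    have hb : L ^ 2 * d ^ 2 ≤ L ^ 2 * (2 * (d * (d - 1))) :=
      mul_le_mul_of_nonneg_left hdd2 (sq_nonneg L)
    nlinarith only [ha, hb]
  have hx2 : x ^ 2 ≤ 16 * (L ^ 2 / d ^ 2) := by
    have h := pow_le_pow_left₀ hx0.le hx4 2
    have h2 : (4 * L / d) ^ 2 = 16 * (L ^ 2 / d ^ 2) := by ring
    linarith only [h, h2.le, h2.ge]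
  have hd2L : 1 / d ^ 2 ≤ L ^ 2 / d ^ 2 := by
    have hL2 : 1 ≤ L ^ 2 := by nlinarith only [hL1]
    gcongr
  have h100 : 100 * L ^ 2 / d ^ 2 = 100 * (L ^ 2 / d ^ 2) := by ring
  rw [abs_le]
  constructor <;>
  linarith only [he1_lb, he1_ub, he2_lb, he2_ub, hT_pos, hT_ub, hx2, hd2L,
    h100.le, h100.ge]
end

section
/- For every real d > 1, the equation cosh(d x) = d cosh(x) has exactly one root x > 0. -/
/-- For every real `d > 1`, the equation `cosh (d x) = d cosh x` has exactly one
positive root. -/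
theorem stmt_6 (d : ℝ) (hd : 1 < d) :
    ∃! x : ℝ, 0 < x ∧ Real.cosh (d * x) = d * Real.cosh x := by
  have hd0 : 0 < d := lt_trans one_pos hd
  set f : ℝ → ℝ := fun x => Real.cosh (d * x) - d * Real.cosh x with hf
  have hderiv : ∀ x : ℝ, HasDerivAt f (d * Real.sinh (d * x) - d * Real.sinh x) x := by
    intro x
    have h1 : HasDerivAt (fun x : ℝ => Real.cosh (d * x)) (Real.sinh (d * x) * d) x := by
      have hm : HasDerivAt (fun y : ℝ => d * y) d x := by
        simpa using (hasDerivAt_id x).const_mul d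
      exact (Real.hasDerivAt_cosh (d * x)).comp x hm
    have h2 : HasDerivAt (fun x : ℝ => d * Real.cosh x) (d * Real.sinh x) x :=
      (Real.hasDerivAt_cosh x).const_mul d
    have := h1.sub h2
    rw [mul_comm (Real.sinh (d * x)) d] at this
    exact this
  have hcont : Continuous f := by
    fun_prop
  have hmono : StrictMonoOn f (Set.Ici 0) := by
    apply strictMonoOn_of_deriv_pos (convex_Ici 0) hcont.continuousOn
    intro x hx
    rw [interior_Ici] at hx
    rw [(hderiv x).deriv]
    have : Real.sinh x < Real.sinh (d * x) := by
      rw [Real.sinh_lt_sinh]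
      nlinarith [Set.mem_Ioi.mp hx]
    nlinarith
  -- existence of a point where f is positive
  set M : ℝ := Real.log (2 * d) / (d - 1) + 1 with hM
  have hd1 : 0 < d - 1 := by linarith
  have hlog : 0 < Real.log (2 * d) := Real.log_pos (by linarith)
  have hMpos : 0 < M := by positivity
  have hfM : 0 < f M := by
    have hexp : 2 * d < Real.exp ((d - 1) * M) := by
      have : Real.log (2 * d) < (d - 1) * M := by
        rw [hM]
        field_simp
        nlinarith
      calc 2 * d = Real.exp (Real.log (2 * d)) := (Real.exp_log (by linarith)).symm
        _ < Real.exp ((d - 1) * M) := Real.exp_lt_exp.mpr this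
    have h1 : Real.exp (d * M) / 2 ≤ Real.cosh (d * M) := by
      rw [Real.cosh_eq]
      have := (Real.exp_pos (-(d * M))).le
      linarith
    have h2 : Real.cosh M ≤ Real.exp M := by
      rw [Real.cosh_eq]
      have h3 : Real.exp (-M) ≤ Real.exp M := Real.exp_le_exp.mpr (by linarith)
      linarith
    have key : d * Real.exp M < Real.exp (d * M) / 2 := by
      have : Real.exp (d * M) = Real.exp ((d - 1) * M) * Real.exp M := by
        rw [← Real.exp_add]; ring_nf
      rw [this]
      have hE : 0 < Real.exp M := Real.exp_pos M
      nlinarith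
    have : d * Real.cosh M < Real.cosh (d * M) := by
      calc d * Real.cosh M ≤ d * Real.exp M := by nlinarith
        _ < Real.exp (d * M) / 2 := key
        _ ≤ Real.cosh (d * M) := h1
    simpa [hf] using sub_pos.mpr this
  have hf0 : f 0 < 0 := by simp [hf]; linarith
  obtain ⟨x, hx, hfx⟩ := intermediate_value_Ioo hMpos.le hcont.continuousOn
    (Set.mem_Ioo.mpr ⟨hf0, hfM⟩)
  refine ⟨x, ⟨hx.1, by simpa [hf, sub_eq_zero] using hfx⟩, ?_⟩
  rintro y ⟨hy, hey⟩
  have hfy : f y = 0 := by simp [hf, hey]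
  have hfx0 : f x = 0 := hfx
  have := hmono.injOn (Set.mem_Ici.mpr hy.le) (Set.mem_Ici.mpr hx.1.le)
    (by rw [hfy, hfx0])
  exact this
end

section
/- There exist constants C > 0 and d_0 > 1 such that for all real d ≥ d_0, |ξ_d - log(2d)/d| ≤ C (log d)²/d³, where ξ_d is the unique positive root of cosh(d ξ) = d cosh(ξ). -/
/-- `(log d)^2 ≤ 4 d` for `d ≥ 1`. -/
private lemma aux_log_sq_le {d : ℝ} (hd : 1 ≤ d) : (Real.log d) ^ 2 ≤ 4 * d := by
  have hd0 : (0:ℝ) < d := by linarith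
  have hs : Real.sqrt d ^ 2 = d := Real.sq_sqrt hd0.le
  have h1 : Real.log d = 2 * Real.log (Real.sqrt d) := by
    rw [Real.log_sqrt hd0.le]; ring
  have h2 : Real.log (Real.sqrt d) ≤ Real.sqrt d - 1 :=
    Real.log_le_sub_one_of_pos (Real.sqrt_pos.mpr hd0)
  have h3 : 0 ≤ Real.log d := Real.log_nonneg hd
  have h4 : 0 ≤ Real.sqrt d := Real.sqrt_nonneg d
  nlinarith [h2, hs, h3]

/-- `sinh t ≤ t * exp t` for `t ≥ 0`. -/
private lemma aux_sinh_le {t : ℝ} (ht : 0 ≤ t) : Real.sinh t ≤ t * Real.exp t := by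
  rw [Real.sinh_eq]
  have h1 : Real.exp (-t) = Real.exp t * Real.exp (-(2*t)) := by
    rw [← Real.exp_add]; ring_nf
  have h2 : -(2*t) + 1 ≤ Real.exp (-(2*t)) := Real.add_one_le_exp _
  nlinarith [Real.exp_pos t, Real.exp_pos (-(2*t))]

/-- `cosh y ≤ 1 + 2 y^2` for `0 ≤ y ≤ 1`. -/
private lemma aux_cosh_le {y : ℝ} (hy0 : 0 ≤ y) (hy1 : y ≤ 1) :
    Real.cosh y ≤ 1 + 2 * y ^ 2 := by
  have hid : Real.cosh y = 2 * Real.sinh (y/2) ^ 2 + 1 := by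
    have h1 : Real.cosh (2 * (y/2)) = Real.cosh (y/2) ^ 2 + Real.sinh (y/2) ^ 2 :=
      Real.cosh_two_mul _
    have h2 : Real.cosh (y/2) ^ 2 = Real.sinh (y/2) ^ 2 + 1 := Real.cosh_sq _
    rw [show 2 * (y/2) = y by ring] at h1
    rw [h1, h2]; ring
  have hs : Real.sinh (y/2) ≤ (y/2) * Real.exp (y/2) := aux_sinh_le (by linarith)
  have hehalf : Real.exp (y/2) ≤ 2 := by
    have h1 : Real.exp (y/2) ≤ Real.exp (1/2) := Real.exp_le_exp.mpr (by linarith)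
    have h2 : Real.exp (1/2) * Real.exp (1/2) = Real.exp 1 := by
      rw [← Real.exp_add]; norm_num
    nlinarith [Real.exp_pos (1/2 : ℝ), Real.exp_one_lt_d9]
  have hsinh_pos : 0 ≤ Real.sinh (y/2) := by
    rw [← Real.sinh_zero]
    exact Real.sinh_le_sinh.mpr (by linarith)
  have hexp_pos : (0:ℝ) < Real.exp (y/2) := Real.exp_pos _
  have hs2 : Real.sinh (y/2) ≤ y := by nlinarith
  rw [hid]; nlinarith

/-- strict monotonicity of `t ↦ cosh (d t) - d cosh t` on `[0, ∞)`. -/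
private lemma aux_mono {d : ℝ} (hd : 1 < d) :
    StrictMonoOn (fun t => Real.cosh (d*t) - d * Real.cosh t) (Set.Ici (0:ℝ)) := by
  have hder : ∀ t : ℝ, HasDerivAt (fun t => Real.cosh (d*t) - d * Real.cosh t)
      (Real.sinh (d*t) * d - d * Real.sinh t) t := by
    intro t
    have h1 : HasDerivAt (fun t : ℝ => Real.cosh (d*t)) (Real.sinh (d*t) * d) t := by
      have := (Real.hasDerivAt_cosh (d*t)).comp t ((hasDerivAt_id t).const_mul d)
      simpa [Function.comp_def] using this
    have h2 : HasDerivAt (fun t : ℝ => d * Real.cosh t) (d * Real.sinh t) t :=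
      (Real.hasDerivAt_cosh t).const_mul d
    exact h1.sub h2
  apply strictMonoOn_of_deriv_pos (convex_Ici 0)
  · exact Continuous.continuousOn (by continuity)
  · intro t ht
    rw [interior_Ici] at ht
    rw [(hder t).deriv]
    have ht0 : 0 < t := ht
    have h3 : Real.sinh t < Real.sinh (d*t) := Real.sinh_lt_sinh.mpr (by nlinarith)
    nlinarith


private lemma aux_exp_neg_le {s : ℝ} (h0 : 0 ≤ s) (h1 : s ≤ 1) :
    Real.exp (-s) ≤ 1 - s/2 := by
  have hEprod : Real.exp (-s) * Real.exp s = 1 := by rw [← Real.exp_add]; simp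
  have hE_lb : 1 + s ≤ Real.exp s := by linarith [Real.add_one_le_exp s]
  nlinarith [mul_nonneg (Real.exp_pos (-s)).le (by linarith : (0:ℝ) ≤ Real.exp s - (1+s)),
    hEprod, h0, h1]

private lemma aux_exp_le_three {s : ℝ} (h1 : s ≤ 1) : Real.exp s ≤ 3 := by
  have h2 : Real.exp s ≤ Real.exp 1 := Real.exp_le_exp.mpr h1
  nlinarith [Real.exp_one_lt_d9]

private lemma aux_key {d A lv : ℝ} (hd : 200 ≤ d) (hl1 : 1 ≤ lv) (hl2 : lv^2 ≤ 4*d)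
    (hA1 : 1 ≤ A) (hA2 : A ≤ 2*lv) :
    2 * (A * d^2 + 40 * lv^2)^2 * d^2 < 40 * lv^2 * (d^3)^2 := by
  have hd0 : (0:ℝ) < d := by linarith
  have hXpos : 0 < A * d^2 + 40*lv^2 := by
    nlinarith [mul_nonneg (by linarith : (0:ℝ) ≤ A - 1) (sq_nonneg d),
      mul_pos hd0 hd0, sq_nonneg lv]
  have h160 : 160 * d ≤ lv * d^2 := by
    nlinarith [mul_nonneg (by linarith : (0:ℝ) ≤ lv - 1) (sq_nonneg d),
      mul_nonneg (by linarith : (0:ℝ) ≤ d - 200) hd0.le]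
  have hA : A * d^2 + 40 * lv^2 ≤ 3 * lv * d^2 := by
    have ha1 : A * d^2 ≤ 2*lv*d^2 := by
      nlinarith [mul_le_mul_of_nonneg_right hA2 (sq_nonneg d)]
    nlinarith [hl2, hd0.le]
  have h9 : 2 * (A * d^2 + 40*lv^2)^2 * d^2 ≤ 18 * lv^2 * d^6 := by
    nlinarith [mul_le_mul hA hA hXpos.le (by positivity : (0:ℝ) ≤ 3*lv*d^2),
      sq_nonneg d, hd0]
  have hpos : (0:ℝ) < lv^2 * d^6 := by positivity
  nlinarith [h9, hpos]

set_option maxHeartbeats 1000000 in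
/-- Asymptotics of `ξ_d`: if for each real `d > 1`, `ξ d` is the unique positive root of
`cosh (d ξ) = d cosh ξ`, then `ξ d = log (2d)/d + O((log d)²/d³)` as `d → ∞`. -/
theorem stmt_7 (ξ : ℝ → ℝ)
    (hξ : ∀ d : ℝ, 1 < d → 0 < ξ d ∧ Real.cosh (d * ξ d) = d * Real.cosh (ξ d)) :
    ∃ C : ℝ, 0 < C ∧ ∃ d₀ : ℝ, 1 < d₀ ∧ ∀ d : ℝ, d₀ ≤ d →
      |ξ d - Real.log (2 * d) / d| ≤ C * (Real.log d) ^ 2 / d ^ 3 := by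
  refine ⟨40, by norm_num, 200, by norm_num, fun d hd => ?_⟩
  have hd1 : (1:ℝ) < d := by linarith
  have hd0 : (0:ℝ) < d := by linarith
  have hdne : d ≠ 0 := ne_of_gt hd0
  obtain ⟨hξpos, hξeq⟩ := hξ d hd1
  set l := Real.log d with hl_def
  set L := Real.log (2*d) / d with hL_def
  set δ := 40 * l ^ 2 / d ^ 3 with hδ_def
  set s := 40 * l ^ 2 / d ^ 2 with hs_def
  -- basic facts
  have hl1 : 1 ≤ l := by
    rw [hl_def, Real.le_log_iff_exp_le hd0]
    nlinarith [Real.exp_one_lt_d9]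
  have hl2 : l ^ 2 ≤ 4 * d := aux_log_sq_le (by linarith)
  have hr : Real.sqrt d ^ 2 = d := Real.sq_sqrt hd0.le
  have hr14 : (14:ℝ) ≤ Real.sqrt d := by
    nlinarith [Real.sqrt_nonneg d]
  have hlr : l ≤ 2 * Real.sqrt d := by
    have h1 : Real.sqrt (l^2) ≤ Real.sqrt (4*d) := Real.sqrt_le_sqrt hl2
    rw [Real.sqrt_sq (by linarith : (0:ℝ) ≤ l),
      show (4:ℝ)*d = 2^2*d by norm_num, Real.sqrt_mul (by positivity),
      Real.sqrt_sq (by norm_num : (0:ℝ) ≤ 2)] at h1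
    exact h1
  have hlog2 : Real.log 2 ≤ 1 := by
    have := Real.log_le_sub_one_of_pos (by norm_num : (0:ℝ) < 2); linarith
  have hlog2pos : 0 < Real.log 2 := Real.log_pos (by norm_num)
  have hlog2d : Real.log (2*d) = Real.log 2 + l := Real.log_mul (by norm_num) hdne
  have hlog2d_lb : 1 ≤ Real.log (2*d) := by rw [hlog2d]; linarith
  have hlog2d_ub : Real.log (2*d) ≤ 2 * l := by rw [hlog2d]; linarith
  have hs0 : 0 < s := by rw [hs_def]; positivity
  have hδ0 : 0 < δ := by rw [hδ_def]; positivity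
  have hs1 : s ≤ 1 := by
    rw [hs_def, div_le_one (by positivity)]
    nlinarith [mul_pos hd0 hd0]
  have hδL : δ < L := by
    rw [hδ_def, hL_def, div_lt_div_iff₀ (by positivity) hd0]
    have e1 : 40*l^2*d ≤ 160*d^2 := by nlinarith [hd0.le, hl2]
    have e2 : 160*d^2 < d^3 := by nlinarith [mul_pos hd0 hd0]
    have e3 : d^3 ≤ Real.log (2*d) * d^3 :=
      le_mul_of_one_le_left (by positivity) hlog2d_lb
    linarith
  have hLhalf : L ≤ 1/2 := by
    rw [hL_def, div_le_div_iff₀ hd0 (by norm_num : (0:ℝ) < 2)]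
    -- log(2d) * 2 ≤ d
    have h1 : Real.log (2*d) ≤ 2*l := hlog2d_ub
    have h2 : (8:ℝ) * Real.sqrt d ≤ d := by nlinarith [hr, hr14, Real.sqrt_nonneg d]
    nlinarith [hlr]
  have hδ_small : δ ≤ 1/2 := by linarith
  -- the function g
  have hmono := aux_mono hd1
  -- key products
  have hbd : d * (L + δ) = Real.log (2*d) + s := by
    rw [hL_def, hδ_def, hs_def]; field_simp
  have had : d * (L - δ) = Real.log (2*d) - s := by
    rw [hL_def, hδ_def, hs_def]; field_simp
  -- upper bound: cosh (d (L+δ)) > d cosh (L+δ)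
  have hb : d * Real.cosh (L + δ) < Real.cosh (d * (L + δ)) := by
    have hcosh1 : Real.cosh (L + δ) ≤ 1 + 2 * (L + δ)^2 :=
      aux_cosh_le (by linarith) (by linarith)
    have hexp_eq : Real.exp (Real.log (2*d) + s) = 2 * d * Real.exp s := by
      rw [Real.exp_add, Real.exp_log (by positivity)]
    have hcosh_lb : d * Real.exp s ≤ Real.cosh (d * (L + δ)) := by
      rw [hbd, Real.cosh_eq, hexp_eq]
      linarith [Real.exp_pos (-(Real.log (2*d) + s))]
    have hes : 1 + s ≤ Real.exp s := by linarith [Real.add_one_le_exp s]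
    have hkey : 2 * (L + δ)^2 < s := by
      have hsum : L + δ = (Real.log (2*d) * d^2 + 40 * l^2) / d^3 := by
        rw [hL_def, hδ_def]; field_simp
      rw [hsum, hs_def, div_pow, ← mul_div_assoc,
        div_lt_div_iff₀ (by positivity) (by positivity)]
      exact aux_key hd hl1 hl2 hlog2d_lb hlog2d_ub
    calc d * Real.cosh (L + δ) ≤ d * (1 + 2 * (L + δ)^2) :=
        mul_le_mul_of_nonneg_left hcosh1 hd0.le
      _ < d * (1 + s) := by
        apply mul_lt_mul_of_pos_left (by linarith) hd0
      _ ≤ d * Real.exp s := mul_le_mul_of_nonneg_left hes hd0.le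
      _ ≤ Real.cosh (d * (L + δ)) := hcosh_lb
  -- lower bound: cosh (d (L-δ)) < d cosh (L-δ)
  have ha : Real.cosh (d * (L - δ)) < d * Real.cosh (L - δ) := by
    have e1 : Real.exp (Real.log (2*d) - s) = 2*d*Real.exp (-s) := by
      rw [show Real.log (2*d) - s = Real.log (2*d) + (-s) by ring, Real.exp_add,
        Real.exp_log (by positivity)]
    have e2 : Real.exp (-(Real.log (2*d) - s)) = Real.exp s / (2*d) := by
      rw [show -(Real.log (2*d) - s) = s - Real.log (2*d) by ring, Real.exp_sub,
        Real.exp_log (by positivity)]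
    have hcosh_eq : Real.cosh (d * (L - δ)) = d * Real.exp (-s) + Real.exp s / (4*d) := by
      rw [had, Real.cosh_eq, e1, e2]
      field_simp; ring
    have hexpneg : Real.exp (-s) ≤ 1 - s/2 := aux_exp_neg_le hs0.le hs1
    have hE_ub : Real.exp s ≤ 3 := aux_exp_le_three hs1
    have hcosh1 : 1 ≤ Real.cosh (L - δ) := Real.one_le_cosh _
    have hd2s : d^2 * s = 40 * l^2 := by rw [hs_def]; field_simp
    have hfinal : d * Real.exp (-s) + Real.exp s / (4*d) < d := by
      have h1 : d * Real.exp (-s) ≤ d - d * s / 2 :=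
        calc d * Real.exp (-s) ≤ d * (1 - s/2) := mul_le_mul_of_nonneg_left hexpneg hd0.le
          _ = d - d * s / 2 := by ring
      have h2 : Real.exp s / (4*d) ≤ 3 / (4*d) := by gcongr
      have h3 : 3 / (4*d) < d * s / 2 := by
        rw [div_lt_div_iff₀ (by positivity) (by norm_num : (0:ℝ) < 2)]
        have e : d * s * (4*d) = 160 * l^2 := by linear_combination 4 * hd2s
        rw [e]
        nlinarith [hl1]
      linarith
    calc Real.cosh (d * (L - δ)) = d * Real.exp (-s) + Real.exp s / (4*d) := hcosh_eq
      _ < d := hfinal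
      _ ≤ d * Real.cosh (L - δ) := le_mul_of_one_le_right hd0.le hcosh1
  -- conclude via monotonicity
  have hmem1 : L - δ ∈ Set.Ici (0:ℝ) := Set.mem_Ici.mpr (by linarith)
  have hmem2 : ξ d ∈ Set.Ici (0:ℝ) := Set.mem_Ici.mpr (by linarith)
  have hmem3 : L + δ ∈ Set.Ici (0:ℝ) := Set.mem_Ici.mpr (by linarith)
  have h1 : L - δ < ξ d := by
    by_contra h
    push_neg at h
    have h2 := hmono.monotoneOn hmem2 hmem1 h
    rw [hξeq] at h2
    linarith
  have h2 : ξ d < L + δ := by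
    by_contra h
    push_neg at h
    have h2 := hmono.monotoneOn hmem3 hmem2 h
    rw [hξeq] at h2
    linarith
  have habs : |ξ d - L| ≤ δ := abs_le.mpr ⟨by linarith, by linarith⟩
  calc |ξ d - Real.log (2*d)/d| = |ξ d - L| := by rw [hL_def]
    _ ≤ δ := habs
    _ = 40 * (Real.log d)^2 / d^3 := by rw [hδ_def, hl_def]
end

section
/- For every real d ≥ 2, γ(d) > 1, where γ(d) := d^{-d/(d-1)}(sinh(d ξ_d) + d sinh(ξ_d)) and ξ_d is the unique positive root of cosh(d ξ) = d cosh(ξ). -/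
lemma aux_num (d M : ℝ) (hd : 2 ≤ d) (hM1 : 1 ≤ M) :
    d + 1 / d ≤ d * M * ((d + 1) ^ 2 / (d ^ 2 * M + 1)) := by
  have hd0 : (0:ℝ) < d := by linarith
  rw [show d * M * ((d + 1) ^ 2 / (d ^ 2 * M + 1))
      = d * M * (d + 1) ^ 2 / (d ^ 2 * M + 1) by ring,
    le_div_iff₀ (by positivity)]
  have hinv : 1 / d ≤ 1 := by rw [div_le_one hd0]; linarith
  have hdd : d * (1 / d) = 1 := by field_simp
  have h2 : 2 * d ^ 2 ≤ 2 * d ^ 2 * M := by nlinarith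
  nlinarith [hM1, hinv, hdd, h2]

lemma aux_contra (d M X q : ℝ) (hd : 2 ≤ d) (hM1 : 1 ≤ M)
    (hq : d * M * (1 + (d + 1) ^ 2 / (d ^ 2 * M + 1)) ≤ q) (hqX : q < X)
    (h : X < d * M + d + 1 / d) : False := by
  have h1 := aux_num d M hd hM1
  have h2 : d * M * (1 + (d + 1) ^ 2 / (d ^ 2 * M + 1))
      = d * M + d * M * ((d + 1) ^ 2 / (d ^ 2 * M + 1)) := by ring
  linarith

set_option maxHeartbeats 1000000 in
/-- For every real `d ≥ 2`, `γ(d) > 1`, where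
`γ(d) = d^(-d/(d-1)) * (sinh (d ξ) + d sinh ξ)` and `ξ` is the unique positive root of
`cosh (d ξ) = d cosh ξ`. -/
theorem stmt_8 (d : ℝ) (hd : 2 ≤ d) (ξ : ℝ) (hξpos : 0 < ξ)
    (hξ : Real.cosh (d * ξ) = d * Real.cosh ξ)
    (hξuniq : ∀ x : ℝ, 0 < x → Real.cosh (d * x) = d * Real.cosh x → x = ξ) :
    1 < d ^ (-d / (d - 1)) * (Real.sinh (d * ξ) + d * Real.sinh ξ) := by
  clear hξuniq
  have hd0 : (0:ℝ) < d := by linarith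
  have hd1 : (0:ℝ) < d - 1 := by linarith
  obtain ⟨P, hPdef⟩ : ∃ P, P = Real.exp (d * ξ) := ⟨_, rfl⟩
  obtain ⟨Q, hQdef⟩ : ∃ Q, Q = Real.exp ξ := ⟨_, rfl⟩
  have hP0 : 0 < P := hPdef ▸ Real.exp_pos _
  have hQ0 : 0 < Q := hQdef ▸ Real.exp_pos _
  have hQ1 : 1 < Q := hQdef ▸ Real.one_lt_exp_iff.mpr hξpos
  have hP1 : 1 < P := hPdef ▸ Real.one_lt_exp_iff.mpr (by positivity)
  -- constraint in exponential form
  have hC : P + P⁻¹ = d * (Q + Q⁻¹) := by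
    have h1 : Real.cosh (d * ξ) = (P + P⁻¹) / 2 := by
      rw [Real.cosh_eq, hPdef, ← Real.exp_neg]
    have h2 : Real.cosh ξ = (Q + Q⁻¹) / 2 := by
      rw [Real.cosh_eq, hQdef, ← Real.exp_neg]
    rw [h1, h2] at hξ; linarith
  have hC2 : P ^ 2 * Q + Q = d * (P * Q ^ 2 + P) := by
    have h := hC
    field_simp at h
    nlinarith [h]
  obtain ⟨A, hAdef⟩ : ∃ A, A = P / Q := ⟨_, rfl⟩
  obtain ⟨X, hXdef⟩ : ∃ X, X = P * Q := ⟨_, rfl⟩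
  have hA0 : 0 < A := by rw [hAdef]; positivity
  have hX0 : 0 < X := by rw [hXdef]; positivity
  -- key identity
  have hI : (A - d) * (X - d) = d ^ 2 - 1 := by
    rw [hAdef, hXdef]
    field_simp
    nlinarith [hC2]
  have hA1 : 1 < A := by
    rw [hAdef, hPdef, hQdef, ← Real.exp_sub]
    exact Real.one_lt_exp_iff.mpr (by nlinarith)
  have hAX : (A - d) * X = d * A - 1 := by linear_combination hI
  have hAd : d < A := by nlinarith [hAX, hX0, hA1]
  have hXd : d < X := by nlinarith [hI, hAd]
  obtain ⟨M, hMdef⟩ : ∃ M, M = d ^ ((2:ℝ) / (d - 1)) := ⟨_, rfl⟩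
  have hM1 : 1 ≤ M := hMdef ▸ Real.one_le_rpow (by linarith) (by positivity)
  -- main inequality
  have hmain : d * M + d + 1 / d < X + X⁻¹ := by
    rcases le_or_gt (d * M + d + 1 / d) X with h | h
    · have : 0 < X⁻¹ := by positivity
      linarith
    · exfalso
      obtain ⟨β, hβdef⟩ : ∃ β, β = (d ^ 2 - 1) / (d ^ 2 * M + 1) := ⟨_, rfl⟩
      have hMpos : (0:ℝ) < d ^ 2 * M + 1 := by positivity
      have hβ0 : 0 ≤ β := hβdef ▸ div_nonneg (by nlinarith) (le_of_lt hMpos)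
      have h2 : d * (1 + β) < A := by
        have hden : 0 < d * M + 1 / d := by positivity
        have h3 : (d ^ 2 - 1) / (d * M + 1 / d) < A - d := by
          rw [div_lt_iff₀ hden]
          have hAd' : 0 < A - d := by linarith
          have hstep := mul_lt_mul_of_pos_left
            (show X - d < d * M + 1 / d by linarith) hAd'
          rw [hI] at hstep
          linarith
        have h4 : d * (1 + β) - d = (d ^ 2 - 1) / (d * M + 1 / d) := by
          rw [hβdef, hMdef]
          field_simp
          ring
        linarith [h4 ▸ h3]
      obtain ⟨t, htdef⟩ : ∃ t, t = (d + 1) / (d - 1) := ⟨_, rfl⟩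
      have ht1 : 1 ≤ t := by rw [htdef, le_div_iff₀ hd1]; linarith
      have hXA : X = A ^ t := by
        have hA' : A = Real.exp ((d - 1) * ξ) := by
          rw [hAdef, hPdef, hQdef, ← Real.exp_sub]; ring_nf
        have hX' : X = Real.exp ((d + 1) * ξ) := by
          rw [hXdef, hPdef, hQdef, ← Real.exp_add]; ring_nf
        rw [hA', hX', ← Real.exp_mul]
        congr 1
        rw [htdef]
        field_simp
      have hmono : (d * (1 + β)) ^ t < A ^ t :=
        Real.rpow_lt_rpow (by positivity) h2 (by positivity)
      rw [Real.mul_rpow (le_of_lt hd0) (by positivity)] at hmono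
      have hdt : (d:ℝ) ^ t = d * M := by
        rw [hMdef, show t = 1 + 2 / (d - 1) by rw [htdef]; field_simp; ring,
          Real.rpow_add hd0, Real.rpow_one]
      have hbern : 1 + t * β ≤ (1 + β) ^ t :=
        one_add_mul_self_le_rpow_one_add (by linarith) ht1
      have htβ : t * β = (d + 1) ^ 2 / (d ^ 2 * M + 1) := by
        rw [htdef, hβdef]
        field_simp
        ring
      have hdM : (0:ℝ) < d * M := by positivity
      have hq : d * M * (1 + (d + 1) ^ 2 / (d ^ 2 * M + 1)) ≤ d * M * ((1 + β) ^ t) := by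
        rw [← htβ]
        exact mul_le_mul_of_nonneg_left hbern (le_of_lt hdM)
      have hqX : d * M * ((1 + β) ^ t) < X := by
        rw [hXA]; rw [hdt] at hmono; exact hmono
      exact aux_contra d M X _ hd hM1 hq hqX h
  -- express T and conclude
  obtain ⟨T, hTdef⟩ : ∃ T, T = Real.sinh (d * ξ) + d * Real.sinh ξ := ⟨_, rfl⟩
  have hS1 : Real.sinh (d * ξ) = (P - P⁻¹) / 2 := by
    rw [Real.sinh_eq, hPdef, ← Real.exp_neg]
  have hS2 : Real.sinh ξ = (Q - Q⁻¹) / 2 := by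
    rw [Real.sinh_eq, hQdef, ← Real.exp_neg]
  have hT1 : T = P - d * Q⁻¹ := by
    rw [hTdef, hS1, hS2]; linarith [hC]
  have hT2 : T = d * Q - P⁻¹ := by
    rw [hTdef, hS1, hS2]; linarith [hC]
  have hPinv1 : P⁻¹ < 1 := inv_lt_one_of_one_lt₀ hP1
  have hT0 : 0 < T := by
    rw [hT2]; nlinarith [hQ1, hPinv1]
  have e1 : P * P⁻¹ = 1 := mul_inv_cancel₀ (ne_of_gt hP0)
  have e2 : Q * Q⁻¹ = 1 := mul_inv_cancel₀ (ne_of_gt hQ0)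
  have hTsq : T ^ 2 = d * X + d * X⁻¹ - (d ^ 2 + 1) := by
    rw [sq]
    nth_rewrite 1 [hT1]
    rw [hT2, hXdef, mul_inv]
    linear_combination (-1 : ℝ) * e1 - d ^ 2 * e2
  obtain ⟨N, hNdef⟩ : ∃ N, N = d ^ (d / (d - 1)) := ⟨_, rfl⟩
  have hN0 : 0 < N := hNdef ▸ Real.rpow_pos_of_pos hd0 _
  have hNsq : N ^ 2 = d ^ 2 * M := by
    rw [sq, hNdef, ← Real.rpow_add hd0,
      show d / (d - 1) + d / (d - 1) = 2 + 2 / (d - 1) by field_simp; ring,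
      Real.rpow_add hd0, hMdef,
      show ((2:ℝ)) = ((2:ℕ):ℝ) by norm_num, Real.rpow_natCast]
  have hsq : N ^ 2 < T ^ 2 := by
    rw [hNsq, hTsq]
    have hmul := mul_lt_mul_of_pos_left hmain hd0
    have hdd : d * (1 / d) = 1 := by field_simp
    have eq1 : d * (d * M + d + 1 / d) = d ^ 2 * M + d ^ 2 + d * (1 / d) := by ring
    have eq2 : d * (X + X⁻¹) = d * X + d * X⁻¹ := by ring
    linarith [hmul, eq1, eq2, hdd]
  have hNT : N < T := lt_of_pow_lt_pow_left₀ 2 (le_of_lt hT0) hsq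
  have hneg : d ^ (-d / (d - 1)) = N⁻¹ := by
    rw [show -d / (d - 1) = -(d / (d - 1)) by ring, Real.rpow_neg (le_of_lt hd0), hNdef]
  rw [hneg, ← hTdef, inv_mul_eq_div, lt_div_iff₀ hN0, one_mul]
  exact hNT
end

section
/- Let d be an integer with d ≥ 2. Then the closed disk of center 0 and radius α(d) := (d-1) d^{-d/(d-1)} is contained in the multibrot set M_d; that is, if |c| ≤ (d-1) d^{-d/(d-1)}, then the sequence p_c^{[n]}(0) is bounded. -/
/-- The closed disk of radius `α(d) = (d-1) d^(-d/(d-1))` is contained in `M_d`: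
if `|c| ≤ α(d)` then the orbit of `0` under `z ↦ z^d + c` is bounded. -/
theorem stmt_10 (d : ℕ) (hd : 2 ≤ d) (c : ℂ)
    (hc : ‖c‖ ≤ ((d : ℝ) - 1) * (d : ℝ) ^ (-(d : ℝ) / ((d : ℝ) - 1))) :
    BddAbove (Set.range fun n => ‖(fun z : ℂ => z ^ d + c)^[n] 0‖) := by
  set D : ℝ := (d : ℝ) with hDdef
  have hD : (2:ℝ) ≤ D := by rw [hDdef]; exact_mod_cast hd
  have hD0 : 0 < D := by linarith
  have hD1 : D - 1 ≠ 0 := by linarith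
  set r : ℝ := D ^ (-(1:ℝ)/(D-1)) with hr
  have hrpos : 0 < r := Real.rpow_pos_of_pos hD0 _
  have hrd : r ^ d = D ^ (-D/(D-1)) := by
    rw [hr, ← Real.rpow_natCast (D ^ (-(1:ℝ)/(D-1))) d, ← Real.rpow_mul hD0.le]
    congr 1
    field_simp
    rfl
  have hkey : r ^ d + ‖c‖ ≤ r := by
    have h1 : r ^ d + (D - 1) * D ^ (-D/(D-1)) = r := by
      rw [hrd, hr]
      have h2 : D * D ^ (-D/(D-1)) = D ^ (-(1:ℝ)/(D-1)) := by
        nth_rewrite 1 [← Real.rpow_one D]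
        rw [← Real.rpow_add hD0]
        congr 1
        field_simp
        ring
      nlinarith [h2]
    linarith [hc]
  have bound : ∀ n, ‖(fun z : ℂ => z ^ d + c)^[n] 0‖ ≤ r := by
    intro n
    induction n with
    | zero => simp [hrpos.le]
    | succ n ih =>
      rw [Function.iterate_succ_apply']
      calc ‖((fun z : ℂ => z ^ d + c)^[n] 0) ^ d + c‖
          ≤ ‖((fun z : ℂ => z ^ d + c)^[n] 0) ^ d‖ + ‖c‖ :=
            norm_add_le _ _
        _ = ‖(fun z : ℂ => z ^ d + c)^[n] 0‖ ^ d + ‖c‖ := by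
            rw [norm_pow]
        _ ≤ r ^ d + ‖c‖ := by
            gcongr
        _ ≤ r := hkey
  exact ⟨r, by rintro x ⟨n, rfl⟩; exact bound n⟩
end

section
/- Let d be an integer with d ≥ 2. Then the multibrot set M_d is contained in the closed disk of center 0 and radius β(d) := 2^{1/(d-1)}; that is, if the sequence p_c^{[n]}(0) is bounded, then |c| ≤ 2^{1/(d-1)}. -/
/-- `M_d` is contained in the closed disk of radius `β(d) = 2^(1/(d-1))`:
if the orbit of `0` under `z ↦ z^d + c` is bounded, then `|c| ≤ 2^(1/(d-1))`. -/
theorem stmt_11 (d : ℕ) (hd : 2 ≤ d) (c : ℂ)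
    (hc : BddAbove (Set.range fun n => ‖(fun z : ℂ => z ^ d + c)^[n] 0‖)) :
    ‖c‖ ≤ (2 : ℝ) ^ ((1 : ℝ) / ((d : ℝ) - 1)) := by
  by_contra hcon
  push_neg at hcon
  set r := ‖c‖ with hrdef
  have hd1 : (1:ℝ) ≤ (d:ℝ) - 1 := by
    have : (2:ℝ) ≤ (d:ℝ) := by exact_mod_cast hd
    linarith
  have hdpos : (0:ℝ) < (d:ℝ) - 1 := by linarith
  have hβ1 : (1:ℝ) ≤ (2:ℝ) ^ ((1 : ℝ) / ((d : ℝ) - 1)) :=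
    Real.one_le_rpow one_le_two (by positivity)
  have hr1 : 1 < r := lt_of_le_of_lt hβ1 hcon
  have hr0 : 0 < r := by linarith
  have hcast : ((d - 1 : ℕ) : ℝ) = (d:ℝ) - 1 := by
    have h1 : (1:ℕ) ≤ d := by omega
    push_cast [Nat.cast_sub h1]; ring
  have hrd : 2 < r ^ (d - 1) := by
    have h2 : ((2:ℝ) ^ ((1 : ℝ) / ((d : ℝ) - 1))) ^ ((d:ℝ) - 1)
        < r ^ ((d:ℝ) - 1) :=
      Real.rpow_lt_rpow (by positivity) hcon hdpos
    have h3 : ((2:ℝ) ^ ((1 : ℝ) / ((d : ℝ) - 1))) ^ ((d:ℝ) - 1) = 2 := by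
      rw [← Real.rpow_mul (by norm_num), one_div, inv_mul_cancel₀ (ne_of_gt hdpos),
        Real.rpow_one]
    rw [← Real.rpow_natCast r (d-1), hcast]
    linarith
  set lam : ℝ := r ^ (d - 1) - 1 with hlamdef
  have hlam1 : 1 < lam := by simp only [hlamdef]; linarith
  have key : ∀ n : ℕ, lam ^ n * r ≤ ‖(fun z : ℂ => z ^ d + c)^[n+1] 0‖ := by
    intro n
    induction n with
    | zero => simp [zero_pow (by omega : d ≠ 0), hrdef]
    | succ n ih =>
      rw [Function.iterate_succ_apply']
      set z := (fun z : ℂ => z ^ d + c)^[n+1] 0 with hz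
      have hzr : r ≤ ‖z‖ := by
        calc r = 1 * r := (one_mul r).symm
          _ ≤ lam ^ n * r := by
              apply mul_le_mul_of_nonneg_right _ (le_of_lt hr0)
              exact one_le_pow₀ (le_of_lt hlam1)
          _ ≤ ‖z‖ := ih
      have habs : ‖z‖ ^ d - r ≤ ‖z ^ d + c‖ := by
        have := norm_add_le (z ^ d + c) (-c)
        simp only [add_neg_cancel_right, norm_neg] at this
        rw [norm_pow] at this
        linarith
      have hzd : ‖z‖ ^ d = ‖z‖ ^ (d-1) * ‖z‖ := by
        rw [← pow_succ]
        congr 1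
        omega
      have hmono : r ^ (d-1) ≤ ‖z‖ ^ (d-1) :=
        pow_le_pow_left₀ (le_of_lt hr0) hzr _
      have hlow : lam ^ (n+1) * r ≤ ‖z‖ ^ d - r := by
        have h1 : lam * ‖z‖ ≤ ‖z‖ ^ d - ‖z‖ := by
          rw [hzd, hlamdef]
          nlinarith [norm_nonneg z]
        have h2 : lam ^ (n+1) * r = lam * (lam ^ n * r) := by ring
        have h3 : lam ^ n * r ≤ ‖z‖ := ih
        nlinarith [norm_nonneg z]
      calc lam ^ (n+1) * r ≤ ‖z‖ ^ d - r := hlow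
        _ ≤ ‖z ^ d + c‖ := habs
  obtain ⟨M, hM⟩ := hc
  obtain ⟨n, hn⟩ := pow_unbounded_of_one_lt (M / r) hlam1
  have hMn : lam ^ n * r ≤ M := le_trans (key n)
    (hM (Set.mem_range_self (n+1)))
  have : M / r < lam ^ n := hn
  have : M < lam ^ n * r := by
    rw [div_lt_iff₀ hr0] at hn
    linarith
  linarith
end

section
/- Let d be an odd integer with d ≥ 3. Then N_d ∩ [1, ∞) = {a - b^d : a, b ≥ 0, a^d + b^d = a + b} ∩ [1, ∞). -/
open Filter Topology

private lemma iter_real_cast (d : ℕ) (t : ℝ) (n : ℕ) :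
    (fun z : ℂ => -z ^ d + (t : ℂ))^[n] 0 = (((fun x : ℝ => -x ^ d + t)^[n] 0 : ℝ) : ℂ) := by
  induction n with
  | zero => simp
  | succ n ih =>
      rw [Function.iterate_succ_apply', Function.iterate_succ_apply', ih]
      push_cast
      ring

/-- Easy direction: an invariant interval `[-b, a]` containing `0`. -/
private lemma iter_mem_Icc (d : ℕ) (hodd : Odd d) (a b : ℝ) (ha : 0 ≤ a) (hb : 0 ≤ b)
    (hab : a ^ d + b ^ d = a + b) (n : ℕ) :
    (fun x : ℝ => -x ^ d + (a - b ^ d))^[n] 0 ∈ Set.Icc (-b) a := by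
  have hmono : Monotone fun x : ℝ => x ^ d := hodd.strictMono_pow.monotone
  induction n with
  | zero => exact ⟨neg_nonpos.mpr hb, ha⟩
  | succ n ih =>
      rw [Function.iterate_succ_apply']
      obtain ⟨h1, h2⟩ := ih
      set x := (fun x : ℝ => -x ^ d + (a - b ^ d))^[n] 0 with hx
      have hlb : (-b) ^ d ≤ x ^ d := hmono h1
      have hub : x ^ d ≤ a ^ d := hmono h2
      rw [hodd.neg_pow] at hlb
      show -x ^ d + (a - b ^ d) ∈ Set.Icc (-b) a
      constructor
      · linarith
      · linarith

/-- Hard direction: boundedness of the real orbit gives the 2-cycle. -/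
private lemma exists_cycle (d : ℕ) (hd : 3 ≤ d) (hodd : Odd d) (t : ℝ) (ht : 1 ≤ t)
    (M : ℝ) (hM : ∀ n, |(fun x : ℝ => -x ^ d + t)^[n] 0| ≤ M) :
    ∃ a b : ℝ, 0 ≤ a ∧ 0 ≤ b ∧ a ^ d + b ^ d = a + b ∧ t = a - b ^ d := by
  set f : ℝ → ℝ := fun x => -x ^ d + t with hf
  have hpowmono : Monotone fun x : ℝ => x ^ d := hodd.strictMono_pow.monotone
  have hfanti : Antitone f := fun x y hxy => by
    simp only [hf]
    have := hpowmono hxy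
    linarith
  have hfcont : Continuous f := by fun_prop
  set g : ℝ → ℝ := f ∘ f with hg
  have hgmono : Monotone g := fun x y hxy => hfanti (hfanti hxy)
  have hgcont : Continuous g := hfcont.comp hfcont
  set y : ℕ → ℝ := fun n => f^[2 * n] 0 with hy
  have hystep : ∀ n, y (n + 1) = g (y n) := by
    intro n
    simp only [hy, hg, Function.comp]
    rw [show 2 * (n + 1) = (2 * n) + 1 + 1 by ring,
      Function.iterate_succ_apply', Function.iterate_succ_apply']
  -- y is antitone
  have hstep : ∀ n, y (n + 1) ≤ y n := by
    intro n
    induction n with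
    | zero =>
        have h0 : y 0 = 0 := by simp [hy]
        have hf0 : f 0 = t := by
          simp [hf, zero_pow (show d ≠ 0 by omega)]
        have h1 : y 1 = f t := by
          rw [hystep 0, h0]
          simp only [hg, Function.comp_apply, hf0]
        have hft : f t = -t ^ d + t := rfl
        have : t ≤ t ^ d := le_self_pow₀ ht (by omega)
        rw [h0, h1, hft]; linarith
    | succ n ih =>
        calc y (n + 1 + 1) = g (y (n + 1)) := hystep (n + 1)
          _ ≤ g (y n) := hgmono ih
          _ = y (n + 1) := (hystep n).symm
  have hyanti : Antitone y := antitone_nat_of_succ_le hstep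
  have hybdd : BddBelow (Set.range y) := by
    refine ⟨-M, ?_⟩
    rintro _ ⟨n, rfl⟩
    have := hM (2 * n)
    simp only [hy]
    have := abs_le.mp this
    linarith [this.1]
  set L : ℝ := ⨅ n, y n with hL
  have hten : Tendsto y atTop (𝓝 L) := tendsto_atTop_ciInf hyanti hybdd
  have hgten : Tendsto (fun n => g (y n)) atTop (𝓝 (g L)) :=
    (hgcont.tendsto L).comp hten
  have hten' : Tendsto (fun n => y (n + 1)) atTop (𝓝 L) :=
    hten.comp (tendsto_add_atTop_nat 1)
  have hgfix : g L = L := by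
    have : (fun n => y (n + 1)) = fun n => g (y n) := funext hystep
    rw [this] at hten'
    exact tendsto_nhds_unique hgten hten'
  have hL0 : L ≤ 0 := by
    have := ciInf_le hybdd 0
    simpa [hy] using this
  refine ⟨f L, -L, ?_, by linarith, ?_, ?_⟩
  · -- 0 ≤ f L
    have : L ^ d ≤ 0 ^ d := hpowmono hL0
    simp only [hf]
    rw [zero_pow (by omega)] at this
    linarith
  · -- (f L)^d + (-L)^d = f L + (-L)
    have hfix : f (f L) = L := hgfix
    simp only [hf] at hfix ⊢
    rw [hodd.neg_pow]
    linarith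
  · -- t = f L - (-L)^d
    simp only [hf]
    rw [hodd.neg_pow]
    ring

/-- For odd `d ≥ 3`,
`N_d ∩ [1, ∞) = {a - b^d : a, b ≥ 0, a^d + b^d = a + b} ∩ [1, ∞)`. -/
theorem stmt_15 (d : ℕ) (hd : 3 ≤ d) (hodd : Odd d) :
    {c : ℂ | BddAbove (Set.range fun n => ‖(fun z : ℂ => -z ^ d + c)^[n] 0‖)} ∩
      {c : ℂ | ∃ t : ℝ, 1 ≤ t ∧ c = (t : ℂ)} =
    {c : ℂ | ∃ a b : ℝ, 0 ≤ a ∧ 0 ≤ b ∧ a ^ d + b ^ d = a + b ∧ c = ((a - b ^ d : ℝ) : ℂ)} ∩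
      {c : ℂ | ∃ t : ℝ, 1 ≤ t ∧ c = (t : ℂ)} := by
  ext c
  simp only [Set.mem_inter_iff, Set.mem_setOf_eq]
  constructor
  · rintro ⟨hbdd, t, ht, rfl⟩
    refine ⟨?_, t, ht, rfl⟩
    obtain ⟨M, hM⟩ := hbdd
    have hM' : ∀ n, |(fun x : ℝ => -x ^ d + t)^[n] 0| ≤ M := by
      intro n
      have := hM (Set.mem_range_self (f := fun n =>
        ‖(fun z : ℂ => -z ^ d + (t : ℂ))^[n] 0‖) n)
      rwa [iter_real_cast, Complex.norm_real, Real.norm_eq_abs] at this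
    obtain ⟨a, b, ha, hb, hab, hteq⟩ := exists_cycle d hd hodd t ht M hM'
    exact ⟨a, b, ha, hb, hab, by rw [hteq]⟩
  · rintro ⟨⟨a, b, ha, hb, hab, hc⟩, t, ht, hct⟩
    refine ⟨?_, t, ht, hct⟩
    have hteq : t = a - b ^ d := by
      rw [hct] at hc
      exact_mod_cast hc
    refine ⟨max a b, ?_⟩
    rintro _ ⟨n, rfl⟩
    simp only [hct, hteq, iter_real_cast, Complex.norm_real, Real.norm_eq_abs]
    obtain ⟨h1, h2⟩ := iter_mem_Icc d hodd a b ha hb hab n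
    rw [abs_le]
    constructor
    · have : -(max a b) ≤ -b := neg_le_neg (le_max_right a b)
      linarith
    · exact h2.trans (le_max_left a b)
end

section
/- Let d be an odd integer with d ≥ 3, and let a, b ≥ 0 satisfy a^d + b^d = a + b. Set c := a - b^d. Then q_c(-b) = a and q_c(a) = -b, the interval [-b, a] is invariant under q_c, and consequently c ∈ N_d. -/
/-- For odd `d ≥ 3` and `a, b ≥ 0` with `a^d + b^d = a + b`, setting `c = a - b^d`,
we have `q_c(-b) = a`, `q_c(a) = -b`, the interval `[-b, a]` is `q_c`-invariant, and
consequently `c ∈ N_d`. -/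
theorem stmt_16 (d : ℕ) (hd : 3 ≤ d) (hodd : Odd d) (a b : ℝ)
    (ha : 0 ≤ a) (hb : 0 ≤ b) (hab : a ^ d + b ^ d = a + b) :
    -(-b) ^ d + (a - b ^ d) = a ∧
    -a ^ d + (a - b ^ d) = -b ∧
    (∀ x ∈ Set.Icc (-b) a, -x ^ d + (a - b ^ d) ∈ Set.Icc (-b) a) ∧
    BddAbove (Set.range fun n =>
      ‖(fun z : ℂ => -z ^ d + ((a - b ^ d : ℝ) : ℂ))^[n] 0‖) := by
  have hneg : (-b) ^ d = -b ^ d := hodd.neg_pow b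
  have h1 : -(-b) ^ d + (a - b ^ d) = a := by rw [hneg]; ring
  have h2 : -a ^ d + (a - b ^ d) = -b := by linarith
  have hinv : ∀ x ∈ Set.Icc (-b) a, -x ^ d + (a - b ^ d) ∈ Set.Icc (-b) a := by
    intro x hx
    obtain ⟨hx1, hx2⟩ := hx
    have hle1 : (-b) ^ d ≤ x ^ d := hodd.strictMono_pow.monotone hx1
    have hle2 : x ^ d ≤ a ^ d := hodd.strictMono_pow.monotone hx2
    rw [hneg] at hle1
    constructor <;> [linarith; linarith]
  refine ⟨h1, h2, hinv, ?_⟩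
  have key : ∀ n, ∃ x ∈ Set.Icc (-b) a,
      (fun z : ℂ => -z ^ d + ((a - b ^ d : ℝ) : ℂ))^[n] 0 = (x : ℂ) := by
    intro n
    induction n with
    | zero => exact ⟨0, ⟨neg_nonpos.mpr hb, ha⟩, by simp⟩
    | succ n ih =>
      obtain ⟨x, hx, hxe⟩ := ih
      refine ⟨-x ^ d + (a - b ^ d), hinv x hx, ?_⟩
      rw [Function.iterate_succ_apply', hxe]
      push_cast
      ring
  refine ⟨max a b, ?_⟩
  rintro y ⟨n, rfl⟩
  obtain ⟨x, ⟨hx1, hx2⟩, hxe⟩ := key n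
  simp only [hxe, Complex.norm_real, Real.norm_eq_abs]
  rcases abs_cases x with ⟨h, _⟩ | ⟨h, _⟩
  · exact le_max_of_le_left (by rw [h]; exact hx2)
  · exact le_max_of_le_right (by linarith)
end

section
/- Let d be an odd integer with d ≥ 3 and let c ∈ ℝ with c ≥ 1. Then the sequence of even iterates q_c^{[2n]}(0) is decreasing (in n) and the sequence of odd iterates q_c^{[2n+1]}(0) is increasing (in n). -/
/-- For odd `d ≥ 3` and real `c ≥ 1`, the even iterates `q_c^[2n](0)` form a
decreasing sequence and the odd iterates `q_c^[2n+1](0)` form an increasing sequence,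
where `q_c(x) = -x^d + c`. -/
theorem stmt_17 (d : ℕ) (hd : 3 ≤ d) (hodd : Odd d) (c : ℝ) (hc : 1 ≤ c) :
    Antitone (fun n : ℕ => (fun x : ℝ => -x ^ d + c)^[2 * n] 0) ∧
    Monotone (fun n : ℕ => (fun x : ℝ => -x ^ d + c)^[2 * n + 1] 0) := by
  set f : ℝ → ℝ := fun x => -x ^ d + c with hf
  have hanti : ∀ x y : ℝ, x ≤ y → f y ≤ f x := by
    intro x y hxy
    simp only [hf]
    have : x ^ d ≤ y ^ d := (hodd.strictMono_pow (R := ℝ)).le_iff_le.2 hxy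
    linarith
  have key : ∀ n : ℕ, f^[2 * (n + 1)] 0 ≤ f^[2 * n] 0 := by
    intro n
    induction n with
    | zero =>
      have hd0 : d ≠ 0 := by omega
      have h0 : f 0 = c := by simp [hf, zero_pow hd0]
      have h1 : f c = -c ^ d + c := rfl
      have hcd : c ≤ c ^ d := le_self_pow₀ (by linarith) hd0
      have : f^[2] 0 = -c ^ d + c := by
        simp [Function.iterate_succ_apply', h0, h1]
      simpa [this] using by linarith
    | succ k ih =>
      have h1 : f^[2 * (k + 1)] 0 = f (f^[2 * k + 1] 0) := by
        rw [show 2 * (k + 1) = (2 * k + 1) + 1 by ring, Function.iterate_succ_apply']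
      have h2 : f^[2 * (k + 1 + 1)] 0 = f (f^[2 * (k + 1) + 1] 0) := by
        rw [show 2 * (k + 1 + 1) = (2 * (k + 1) + 1) + 1 by ring,
          Function.iterate_succ_apply']
      have h3 : f^[2 * k + 1] 0 = f (f^[2 * k] 0) := Function.iterate_succ_apply' f _ 0
      have h4 : f^[2 * (k + 1) + 1] 0 = f (f^[2 * (k + 1)] 0) :=
        Function.iterate_succ_apply' f _ 0
      rw [h1, h2, h3, h4]
      exact hanti _ _ (hanti _ _ ih)
  have hA : Antitone (fun n : ℕ => f^[2 * n] 0) :=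
    antitone_nat_of_succ_le key
  refine ⟨hA, monotone_nat_of_le_succ fun n => ?_⟩
  have h3 : ∀ m : ℕ, f^[2 * m + 1] 0 = f (f^[2 * m] 0) :=
    fun m => Function.iterate_succ_apply' f _ 0
  rw [h3 n, h3 (n + 1)]
  exact hanti _ _ (key n)
end

section
/- Let d be an odd integer with d ≥ 3 and let ω ∈ ℂ satisfy ω^{d-1} = -1. Then M_d ∩ ℝ⁺ω = ω · (N_d ∩ ℝ⁺); that is, for t ≥ 0, tω ∈ M_d if and only if t ∈ N_d. -/
/-- For odd `d ≥ 3` and `ω^(d-1) = -1`, `M_d ∩ ℝ⁺ω = ω ⬝ (N_d ∩ ℝ⁺)`: for `t ≥ 0`,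
`tω ∈ M_d` if and only if `t ∈ N_d`. -/
theorem stmt_18 (d : ℕ) (hd : 3 ≤ d) (hodd : Odd d)
    (ω : ℂ) (hω : ω ^ (d - 1) = -1) :
    ∀ t : ℝ, 0 ≤ t →
      (BddAbove (Set.range fun n =>
          ‖(fun z : ℂ => z ^ d + (t : ℂ) * ω)^[n] 0‖) ↔
        BddAbove (Set.range fun n =>
          ‖(fun z : ℂ => -z ^ d + (t : ℂ))^[n] 0‖)) := by
  intro t _
  have hωd : ω ^ d = -ω := by
    have : ω ^ d = ω ^ (d - 1) * ω := by
      rw [← pow_succ]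
      congr 1
      omega
    rw [this, hω, neg_mul, one_mul]
  have habs : ‖ω‖ = 1 := by
    have h1 : ‖ω‖ ^ (d - 1) = 1 := by
      rw [← norm_pow, hω]
      simp
    have hne : d - 1 ≠ 0 := by omega
    rcases (pow_eq_one_iff_cases.mp h1) with h | h | h
    · exact absurd h hne
    · exact h
    · exfalso
      have := norm_nonneg ω
      linarith [h.1]
  have key : ∀ n : ℕ, (fun z : ℂ => z ^ d + (t : ℂ) * ω)^[n] 0 =
      ω * (fun z : ℂ => -z ^ d + (t : ℂ))^[n] 0 := by
    intro n
    induction n with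
    | zero => simp
    | succ n ih =>
      rw [Function.iterate_succ_apply', Function.iterate_succ_apply', ih]
      simp only [mul_pow, hωd]
      ring
  have heq : (fun n => ‖(fun z : ℂ => z ^ d + (t : ℂ) * ω)^[n] 0‖) =
      fun n => ‖(fun z : ℂ => -z ^ d + (t : ℂ))^[n] 0‖ := by
    funext n
    rw [key n, norm_mul, habs, one_mul]
  rw [heq]
end

section
/- Let d be an odd integer with d ≥ 3. The maximum μ(d) of f(a,b) := a - b^d over the set {(a,b) : a, b ≥ 0, a^d + b^d = a + b} is attained at a point (a₀, b₀) with a₀ > 0 and b₀ > 0 satisfying a₀ b₀ = d^{-2/(d-1)}. -/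
set_option maxHeartbeats 1000000 in
/-- For odd `d ≥ 3`, the maximum `μ(d)` of `f(a,b) = a - b^d` over
`{(a,b) : a, b ≥ 0, a^d + b^d = a + b}` is attained at a point `(a₀, b₀)` with
`a₀ > 0`, `b₀ > 0` and `a₀ b₀ = d^(-2/(d-1))`. -/
theorem stmt_19 (d : ℕ) (hd : 3 ≤ d) (hodd : Odd d) :
    ∃ a₀ b₀ : ℝ, 0 < a₀ ∧ 0 < b₀ ∧ a₀ ^ d + b₀ ^ d = a₀ + b₀ ∧
      a₀ * b₀ = (d : ℝ) ^ (-(2 : ℝ) / ((d : ℝ) - 1)) ∧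
      IsGreatest {x : ℝ | ∃ a b : ℝ, 0 ≤ a ∧ 0 ≤ b ∧ a ^ d + b ^ d = a + b ∧ x = a - b ^ d}
        (a₀ - b₀ ^ d) := by
  have hd0 : d ≠ 0 := by omega
  set S : Set (ℝ × ℝ) := {p | 0 ≤ p.1 ∧ 0 ≤ p.2 ∧ p.1 ^ d + p.2 ^ d = p.1 + p.2} with hSdef
  -- boundedness helper
  have hbound : ∀ a b : ℝ, 0 ≤ a → a ≤ b → 2 < b → a + b < a ^ d + b ^ d := by
    intro a b ha hab hb
    have h4 : (4:ℝ) ≤ b ^ (d-1) := by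
      calc (4:ℝ) = 2^2 := by norm_num
      _ ≤ 2 ^ (d-1) := by apply pow_le_pow_right₀ (by norm_num); omega
      _ ≤ b ^ (d-1) := by apply pow_le_pow_left₀ (by norm_num) hb.le
    have hbd : 4 * b ≤ b ^ d := by
      calc 4*b ≤ b^(d-1) * b := by nlinarith
      _ = b ^ d := by rw [← pow_succ]; congr 1; omega
    nlinarith [pow_nonneg ha d]
  have hSsub : S ⊆ Set.Icc (0:ℝ) 2 ×ˢ Set.Icc (0:ℝ) 2 := by
    rintro ⟨a,b⟩ ⟨ha, hb, hco⟩
    simp only [Set.mem_prod, Set.mem_Icc]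
    have hab2 : a ≤ 2 ∧ b ≤ 2 := by
      rcases le_total a b with h | h
      · have hb2 : b ≤ 2 := by
          by_contra hb2; push_neg at hb2
          exact absurd hco (ne_of_gt (hbound a b ha h hb2))
        exact ⟨h.trans hb2, hb2⟩
      · have ha2 : a ≤ 2 := by
          by_contra ha2; push_neg at ha2
          have := hbound b a hb h ha2
          apply absurd hco; intro hco; linarith
        exact ⟨ha2, h.trans ha2⟩
    exact ⟨⟨ha, hab2.1⟩, hb, hab2.2⟩
  have hclosed : IsClosed S := by
    have : S = {p : ℝ×ℝ | 0 ≤ p.1} ∩ ({p | 0 ≤ p.2} ∩ {p | p.1^d + p.2^d = p.1+p.2}) := by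
      ext p; simp [hSdef]
    rw [this]
    exact (isClosed_le continuous_const continuous_fst).inter
      ((isClosed_le continuous_const continuous_snd).inter
        (isClosed_eq (by fun_prop) (by fun_prop)))
  have hcpt : IsCompact S :=
    (isCompact_Icc.prod isCompact_Icc).of_isClosed_subset hclosed hSsub
  have hne : S.Nonempty := ⟨(1, 0), by simp [hSdef, zero_pow hd0]⟩
  obtain ⟨x₀, hx₀S, hmax⟩ := hcpt.exists_isMaxOn hne
    ((continuous_fst.sub (continuous_snd.pow d)).continuousOn :
      ContinuousOn (fun p : ℝ×ℝ => p.1 - p.2 ^ d) S)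
  obtain ⟨ha₀, hb₀, hcon⟩ := hx₀S
  -- a point with value > 1
  have hgt1 : 1 < x₀.1 - x₀.2 ^ d := by
    set C : ℝ := (d:ℝ) * 2 ^ d with hC
    have hd1 : (1:ℝ) ≤ (d:ℝ) := by exact_mod_cast Nat.one_le_iff_ne_zero.mpr hd0
    have h2d : (8:ℝ) ≤ 2 ^ d := by
      calc (8:ℝ) = 2^3 := by norm_num
      _ ≤ 2^d := pow_le_pow_right₀ (by norm_num) hd
    have hC1 : (1:ℝ) ≤ C := by nlinarith
    set b : ℝ := 1 / (2 * C) with hb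
    have hbpos : 0 < b := by positivity
    have hb2C : 2 * C * b = 1 := by rw [hb]; field_simp [(by linarith : (0:ℝ) < C).ne']
    have hble : b ≤ 1/2 := by
      rw [hb, div_le_div_iff₀ (by positivity) (by norm_num)]; linarith
    have hb1 : b ≤ 1 := by linarith
    have hbd2 : b ^ d ≤ b ^ 2 := pow_le_pow_of_le_one hbpos.le hb1 (by omega)
    have hbd3 : b ^ d ≤ b ^ 3 := pow_le_pow_of_le_one hbpos.le hb1 hd
    have hb2half : b ^ 2 ≤ b / 2 := by nlinarith
    -- IVT to find a
    have hcont : ContinuousOn (fun x : ℝ => x ^ d - x) (Set.Icc 1 2) := by fun_prop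
    have hmem : b - b ^ d ∈ Set.Icc ((fun x : ℝ => x ^ d - x) 1) ((fun x : ℝ => x ^ d - x) 2) := by
      simp only [Set.mem_Icc, one_pow]
      constructor
      · have : b ^ d ≤ b := by nlinarith
        linarith
      · have : (0:ℝ) ≤ b ^ d := by positivity
        linarith
    obtain ⟨a, haI, hag⟩ := intermediate_value_Icc (by norm_num : (1:ℝ) ≤ 2) hcont hmem
    simp only at hag
    rw [Set.mem_Icc] at haI
    have hcon' : a ^ d + b ^ d = a + b := by linarith
    -- bound a^d - a ≤ C * (a-1)
    have hsum : ∑ i ∈ Finset.range d, a ^ i ≤ C := by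
      calc ∑ i ∈ Finset.range d, a ^ i ≤ ∑ _i ∈ Finset.range d, (2:ℝ) ^ d := by
            apply Finset.sum_le_sum; intro i hi
            calc a ^ i ≤ 2 ^ i := pow_le_pow_left₀ (by linarith [haI.1]) haI.2 i
            _ ≤ 2 ^ d := pow_le_pow_right₀ (by norm_num) (Finset.mem_range.mp hi).le
      _ = C := by rw [Finset.sum_const, Finset.card_range, nsmul_eq_mul, hC]
    have hkey : a ^ d - a ≤ C * (a - 1) := by
      have hgs := geom_sum_mul a d
      nlinarith [mul_nonneg (sub_nonneg.mpr hsum) (sub_nonneg.mpr haI.1)]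
    have ha1b2 : b ^ 2 ≤ a - 1 := by nlinarith
    have hval : 1 < a - b ^ d := by nlinarith
    have := hmax (show (a, b) ∈ S from ⟨by linarith [haI.1], hbpos.le, by simpa using hcon'⟩)
    simp only [Set.mem_setOf_eq, Pi.sub_apply, Pi.pow_apply] at this
    linarith
  have ha₀1 : 1 < x₀.1 := by
    have : (0:ℝ) ≤ x₀.2 ^ d := pow_nonneg hb₀ d
    linarith
  have hb₀pos : 0 < x₀.2 := by
    rcases hb₀.lt_or_eq with h | h
    · exact h
    · exfalso
      have h2 : x₀.2 = 0 := h.symm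
      rw [h2, zero_pow hd0] at hcon
      have h3 : x₀.1 < x₀.1 ^ d := by
        calc x₀.1 = 1 * x₀.1 := (one_mul _).symm
        _ < x₀.1 ^ (d-1) * x₀.1 := by
            have : 1 < x₀.1 ^ (d-1) := one_lt_pow₀ ha₀1 (by omega)
            nlinarith
        _ = x₀.1 ^ d := by rw [← pow_succ]; congr 1; omega
      linarith
  -- Lagrange multipliers
  have hprod : x₀.1 * x₀.2 = (d : ℝ) ^ (-(2 : ℝ) / ((d : ℝ) - 1)) := by
    have ha₀pos : (0:ℝ) < x₀.1 := by linarith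
    set g : ℝ × ℝ → ℝ := fun p => p.1 ^ d + p.2 ^ d - p.1 - p.2 with hg
    have hfst : HasStrictFDerivAt (Prod.fst : ℝ × ℝ → ℝ)
        (ContinuousLinearMap.fst ℝ ℝ ℝ) x₀ := hasStrictFDerivAt_fst
    have hsnd : HasStrictFDerivAt (Prod.snd : ℝ × ℝ → ℝ)
        (ContinuousLinearMap.snd ℝ ℝ ℝ) x₀ := hasStrictFDerivAt_snd
    have h1 : HasStrictFDerivAt (fun p : ℝ × ℝ => p.1 ^ d)
        (((d:ℝ) * x₀.1 ^ (d - 1)) • ContinuousLinearMap.fst ℝ ℝ ℝ) x₀ :=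
      (hasStrictDerivAt_pow d x₀.1).comp_hasStrictFDerivAt x₀ hfst
    have h2 : HasStrictFDerivAt (fun p : ℝ × ℝ => p.2 ^ d)
        (((d:ℝ) * x₀.2 ^ (d - 1)) • ContinuousLinearMap.snd ℝ ℝ ℝ) x₀ :=
      (hasStrictDerivAt_pow d x₀.2).comp_hasStrictFDerivAt x₀ hsnd
    have hG : HasStrictFDerivAt g
        ((((d:ℝ) * x₀.1 ^ (d - 1)) • ContinuousLinearMap.fst ℝ ℝ ℝ
          + ((d:ℝ) * x₀.2 ^ (d - 1)) • ContinuousLinearMap.snd ℝ ℝ ℝ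
          - ContinuousLinearMap.fst ℝ ℝ ℝ) - ContinuousLinearMap.snd ℝ ℝ ℝ) x₀ :=
      ((h1.add h2).sub hfst).sub hsnd
    have hφ : HasStrictFDerivAt (fun p : ℝ × ℝ => p.1 - p.2 ^ d)
        (ContinuousLinearMap.fst ℝ ℝ ℝ
          - ((d:ℝ) * x₀.2 ^ (d - 1)) • ContinuousLinearMap.snd ℝ ℝ ℝ) x₀ := hfst.sub h2
    have hop : ∀ᶠ p : ℝ × ℝ in nhds x₀, 0 < p.1 ∧ 0 < p.2 :=
      ((isOpen_lt continuous_const continuous_fst).inter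
        (isOpen_lt continuous_const continuous_snd)).eventually_mem
        (Set.mem_inter ha₀pos hb₀pos)
    have hloc : IsLocalExtrOn (fun p : ℝ × ℝ => p.1 - p.2 ^ d) {p | g p = g x₀} x₀ := by
      refine Or.inr ?_
      have h1' := nhdsWithin_le_nhds (s := {p : ℝ × ℝ | g p = g x₀}) hop
      filter_upwards [h1', self_mem_nhdsWithin] with p hp hpt
      have hgx₀ : g x₀ = 0 := by simp only [hg]; linarith
      have hpt' : g p = 0 := hpt.trans hgx₀
      have hpS : p ∈ S := ⟨hp.1.le, hp.2.le, by simp only [hg] at hpt'; linarith⟩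
      exact hmax hpS
    obtain ⟨Λ, Λ₀, hne0, hsum0⟩ := hloc.exists_multipliers_of_hasStrictFDerivAt_1d hG hφ
    have e1 := DFunLike.congr_fun hsum0 ((1:ℝ), (0:ℝ))
    have e2 := DFunLike.congr_fun hsum0 ((0:ℝ), (1:ℝ))
    simp [ContinuousLinearMap.add_apply, ContinuousLinearMap.sub_apply,
      ContinuousLinearMap.smul_apply, ContinuousLinearMap.coe_fst',
      ContinuousLinearMap.coe_snd', smul_eq_mul] at e1 e2
    set u : ℝ := (d:ℝ) * x₀.1 ^ (d - 1) with hu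
    set v : ℝ := (d:ℝ) * x₀.2 ^ (d - 1) with hv
    have hΛ : Λ ≠ 0 := by
      intro h0
      apply hne0
      have : Λ₀ = 0 := by rw [h0] at e1; linarith
      simp [h0, this, Prod.ext_iff]
    have huv : u * v = 1 := by
      have hΛ₀ : Λ₀ = -(Λ * (u - 1)) := by linarith
      have : Λ * (u * v - 1) = 0 := by rw [hΛ₀] at e2; ring_nf; ring_nf at e2; linarith
      have := (mul_eq_zero.mp this).resolve_left hΛ
      linarith
    -- convert to the product formula
    have hdpos : (0:ℝ) < (d:ℝ) := by positivity
    have hxpos : (0:ℝ) < x₀.1 * x₀.2 := mul_pos ha₀pos hb₀pos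
    have hpow : (x₀.1 * x₀.2) ^ (d - 1) = ((d:ℝ) ^ 2)⁻¹ := by
      have hd2 : (0:ℝ) < (d:ℝ) ^ 2 := by positivity
      rw [mul_pow]
      field_simp
      linear_combination huv
    have hn1 : d - 1 ≠ 0 := by omega
    have hcast : ((d - 1 : ℕ) : ℝ) = (d : ℝ) - 1 := by
      push_cast [Nat.cast_sub (by omega : 1 ≤ d)]; ring
    calc x₀.1 * x₀.2 = ((x₀.1 * x₀.2) ^ (d - 1)) ^ (((d - 1 : ℕ) : ℝ))⁻¹ :=
          (Real.pow_rpow_inv_natCast hxpos.le hn1).symm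
      _ = (((d:ℝ) ^ 2)⁻¹) ^ (((d - 1 : ℕ) : ℝ))⁻¹ := by rw [hpow]
      _ = ((d:ℝ) ^ (-(2:ℝ))) ^ (((d - 1 : ℕ) : ℝ))⁻¹ := by
          congr 1
          rw [Real.rpow_neg hdpos.le, Real.rpow_two]
      _ = (d:ℝ) ^ (-(2:ℝ) * (((d - 1 : ℕ) : ℝ))⁻¹) := (Real.rpow_mul hdpos.le _ _).symm
      _ = (d : ℝ) ^ (-(2 : ℝ) / ((d : ℝ) - 1)) := by rw [hcast, div_eq_mul_inv]
  refine ⟨x₀.1, x₀.2, by linarith, hb₀pos, hcon, hprod, ?_, ?_⟩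
  · exact ⟨x₀.1, x₀.2, ha₀, hb₀, hcon, rfl⟩
  · rintro x ⟨a, b, ha, hb, hc, rfl⟩
    exact hmax (⟨ha, hb, hc⟩ : (a,b) ∈ S)
end
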